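/- arXiv:2312.15394 — 6 statements merged into one kernel-verified Lean document; each statement's English description precedes it below -/
import Mathlib

section
/- Let A, B be n×n complex positive definite matrices. If A ⪯ B in the near order, then λ_i(A) ≤ λ_i(B) for every i = 1, …, n, where eigenvalues are listed in nonincreasing order. -/
open scoped ComplexOrder Matrix

noncomputable section

/-- Real power of a (positive definite) matrix via the continuous functional calculus. -/
def mpow {n : ℕ} (A : Matrix (Fin n) (Fin n) ℂ) (t : ℝ) : Matrix (Fin n) (Fin n) ℂ :=
  cfc (fun x : ℝ => x ^ t) A

/-- The matrix logarithm of a (positive definite) matrix via the continuous functional calculus. -/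
def mlog {n : ℕ} (A : Matrix (Fin n) (Fin n) ℂ) : Matrix (Fin n) (Fin n) ℂ :=
  cfc Real.log A

/-- The metric geometric mean `A ♯ₜ B = A^{1/2} (A^{-1/2} B A^{-1/2})^t A^{1/2}`.
`A ♯ B` is `gmean A B (1/2)`. -/
def gmean {n : ℕ} (A B : Matrix (Fin n) (Fin n) ℂ) (t : ℝ) : Matrix (Fin n) (Fin n) ℂ :=
  mpow A (1/2) * mpow (mpow A (-(1/2)) * B * mpow A (-(1/2))) t * mpow A (1/2)

/-- The Loewner order: `A ≤ B` iff `B - A` is positive semidefinite. -/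
def LoewnerLE {n : ℕ} (A B : Matrix (Fin n) (Fin n) ℂ) : Prop :=
  (B - A).PosSemidef

/-- The near order: `A ⪯ B` iff `I ≤ A⁻¹ ♯ B` in the Loewner order. -/
def NearLE {n : ℕ} (A B : Matrix (Fin n) (Fin n) ℂ) : Prop :=
  LoewnerLE 1 (gmean A⁻¹ B (1/2))

/-- The spectral geometric mean `A ♮ₜ B = (A⁻¹ ♯ B)^t A (A⁻¹ ♯ B)^t`. -/
def smean {n : ℕ} (A B : Matrix (Fin n) (Fin n) ℂ) (t : ℝ) : Matrix (Fin n) (Fin n) ℂ :=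
  mpow (gmean A⁻¹ B (1/2)) t * A * mpow (gmean A⁻¹ B (1/2)) t

/-- The Wasserstein mean `A ◇ₜ B = [(1-t)I + t(A⁻¹ ♯ B)] A [(1-t)I + t(A⁻¹ ♯ B)]`. -/
def wmean {n : ℕ} (A B : Matrix (Fin n) (Fin n) ℂ) (t : ℝ) : Matrix (Fin n) (Fin n) ℂ :=
  (((1 - t : ℝ) : ℂ) • (1 : Matrix (Fin n) (Fin n) ℂ) + ((t : ℝ) : ℂ) • gmean A⁻¹ B (1/2)) * A *
    (((1 - t : ℝ) : ℂ) • (1 : Matrix (Fin n) (Fin n) ℂ) + ((t : ℝ) : ℂ) • gmean A⁻¹ B (1/2))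

/-- The arithmetic mean `A ∇ₜ B = (1-t)A + tB`. -/
def amean {n : ℕ} (A B : Matrix (Fin n) (Fin n) ℂ) (t : ℝ) : Matrix (Fin n) (Fin n) ℂ :=
  ((1 - t : ℝ) : ℂ) • A + ((t : ℝ) : ℂ) • B

/-- The matrix absolute value `|X| = (XᴴX)^{1/2}`. -/
def matAbs {n : ℕ} (X : Matrix (Fin n) (Fin n) ℂ) : Matrix (Fin n) (Fin n) ℂ :=
  mpow (Xᴴ * X) (1/2)

/-- The eigenvalues of a Hermitian matrix listed in nonincreasing order:
`eigDesc hA i` is `λ_{i+1}(A)`, so `eigDesc hA 0 = λ₁(A) ≥ eigDesc hA 1 = λ₂(A) ≥ ⋯`. -/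
def eigDesc {n : ℕ} {A : Matrix (Fin n) (Fin n) ℂ} (hA : A.IsHermitian) : Fin n → ℝ :=
  fun i => (hA.eigenvalues ∘ Tuple.sort hA.eigenvalues) i.rev

namespace My

variable {n : ℕ} {A B : Matrix (Fin n) (Fin n) ℂ}

lemma contOn (f : ℝ → ℝ) (A : Matrix (Fin n) (Fin n) ℂ) : ContinuousOn f (spectrum ℝ A) :=
  (Matrix.finite_real_spectrum (A := A)).continuousOn f

lemma spec_pos (hA : A.PosDef) : ∀ x ∈ spectrum ℝ A, 0 < x := by
  intro x hx
  rw [hA.1.spectrum_real_eq_range_eigenvalues] at hx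
  obtain ⟨i, rfl⟩ := hx
  exact hA.eigenvalues_pos i

lemma mpow_isHermitian (hA : A.PosDef) (t : ℝ) : (mpow A t).IsHermitian := by
  have h : IsSelfAdjoint (mpow A t) := cfc_predicate _ _
  exact h

lemma posDef_conj {X D : Matrix (Fin n) (Fin n) ℂ} (hD : D.PosDef) (hX : IsUnit X) :
    (X * D * Xᴴ).PosDef := by
  refine Matrix.PosDef.of_dotProduct_mulVec_pos (by simpa using Matrix.isHermitian_conjTranspose_mul_mul Xᴴ hD.1) fun v hv => ?_
  have hXH : IsUnit Xᴴ := by simpa [Matrix.star_eq_conjTranspose] using hX.star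
  have h0 : Xᴴ *ᵥ v ≠ 0 :=
    ((Matrix.mulVec_injective_iff_isUnit.mpr hXH).ne_iff' (by simp)).2 hv
  simpa only [Matrix.star_mulVec, Matrix.dotProduct_mulVec, Matrix.vecMul_vecMul,
    Matrix.conjTranspose_conjTranspose] using hD.dotProduct_mulVec_pos h0

lemma mpow_posDef (hA : A.PosDef) (t : ℝ) : (mpow A t).PosDef := by
  rw [mpow, hA.1.cfc_eq, Matrix.IsHermitian.cfc]
  refine posDef_conj (Matrix.PosDef.diagonal fun i => ?_) ?_
  · simp only [Function.comp_apply]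
    exact RCLike.ofReal_pos.mpr (Real.rpow_pos_of_pos (hA.eigenvalues_pos i) t)
  · exact (Unitary.toUnits (hA.1.eigenvectorUnitary)).isUnit

lemma mpow_mul (hA : A.PosDef) (s t : ℝ) : mpow A s * mpow A t = mpow A (s + t) := by
  rw [mpow, mpow, mpow, ← cfc_mul _ _ A (contOn _ _) (contOn _ _)]
  exact cfc_congr fun x hx => (Real.rpow_add (spec_pos hA x hx) s t).symm

lemma mpow_one (hA : A.PosDef) : mpow A 1 = A := by
  rw [mpow]
  have : cfc (fun x : ℝ => x ^ (1:ℝ)) A = cfc (id : ℝ → ℝ) A :=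
    cfc_congr fun x _ => Real.rpow_one x
  rw [this]; exact cfc_id ℝ A hA.1.isSelfAdjoint

lemma mpow_half_mul_half (hA : A.PosDef) : mpow A (1/2) * mpow A (1/2) = A := by
  rw [mpow_mul hA]; norm_num; exact mpow_one hA

lemma mpow_mul_mpow_neg (hA : A.PosDef) (t : ℝ) : mpow A t * mpow A (-t) = 1 := by
  rw [mpow_mul hA, add_neg_cancel, mpow]
  have : cfc (fun x : ℝ => x ^ (0:ℝ)) A = cfc (1 : ℝ → ℝ) A :=
    cfc_congr fun x _ => Real.rpow_zero x
  rw [this]; exact cfc_one ℝ A hA.1.isSelfAdjoint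

lemma inv_eq_cfc (hA : A.PosDef) : A⁻¹ = cfc (fun x : ℝ => x⁻¹) A := by
  refine Matrix.inv_eq_left_inv ?_
  have h1 : cfc (fun x : ℝ => x⁻¹) A * cfc (id : ℝ → ℝ) A = cfc (fun x : ℝ => x⁻¹ * x) A :=
    (cfc_mul _ _ A (contOn _ _) (contOn _ _)).symm
  rw [cfc_id ℝ A hA.1.isSelfAdjoint] at h1
  rw [h1]
  have : cfc (fun x : ℝ => x⁻¹ * x) A = cfc (1 : ℝ → ℝ) A :=
    cfc_congr fun x hx => inv_mul_cancel₀ (spec_pos hA x hx).ne'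
  rw [this]; exact cfc_one ℝ A hA.1.isSelfAdjoint

lemma mpow_inv (hA : A.PosDef) (t : ℝ) : mpow A⁻¹ t = mpow A (-t) := by
  rw [mpow, inv_eq_cfc hA,
    ← cfc_comp' _ _ A (((Matrix.finite_real_spectrum (A := A)).image _).continuousOn _)
      (contOn _ _) hA.1.isSelfAdjoint]
  exact cfc_congr fun x hx => by
    show (x⁻¹) ^ t = x ^ (-t)
    rw [Real.inv_rpow (spec_pos hA x hx).le,
      ← Real.rpow_neg (spec_pos hA x hx).le]


lemma sandwich {R N S A B : Matrix (Fin n) (Fin n) ℂ} (hNR : N * R = 1) (hRN : R * N = 1)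
    (hA2 : R * R = A) (hSS : S * S = R * B * R) :
    (N * S * N) * A * (N * S * N) = B := by
  have h1 : ∀ X : Matrix (Fin n) (Fin n) ℂ, N * (R * X) = X := fun X => by
    rw [← mul_assoc, hNR, one_mul]
  have h2 : ∀ X : Matrix (Fin n) (Fin n) ℂ, R * (N * X) = X := fun X => by
    rw [← mul_assoc, hRN, one_mul]
  rw [← hA2]
  calc (N * S * N) * (R * R) * (N * S * N)
      = N * (S * (N * (R * (R * (N * (S * N)))))) := by simp only [mul_assoc]
    _ = N * (S * (R * (N * (S * N)))) := by rw [h1]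
    _ = N * (S * (S * N)) := by rw [h2]
    _ = N * (R * (B * (R * N))) := by rw [show S * (S * N) = R * (B * (R * N)) from by
          rw [← mul_assoc, hSS]; simp only [mul_assoc]]
    _ = B * (R * N) := by rw [h1]
    _ = B := by rw [hRN, mul_one]

/-- Quadratic form of a Hermitian matrix in eigen-coordinates. -/
lemma quad_eq {M : Matrix (Fin n) (Fin n) ℂ} (hM : M.IsHermitian) (v : Fin n → ℂ) :
    star v ⬝ᵥ (M *ᵥ v) =
      ((∑ j, hM.eigenvalues j *
        Complex.normSq ((star (hM.eigenvectorUnitary : Matrix (Fin n) (Fin n) ℂ) *ᵥ v) j) : ℝ) : ℂ)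
    := by
  set U := (hM.eigenvectorUnitary : Matrix (Fin n) (Fin n) ℂ) with hU
  set w := star U *ᵥ v with hw
  have hsw : star w = star v ᵥ* U := by
    rw [hw, Matrix.star_mulVec, Matrix.star_eq_conjTranspose, Matrix.conjTranspose_conjTranspose]
  conv_lhs => rw [hM.spectral_theorem, Unitary.conjStarAlgAut_apply]
  rw [← Matrix.mulVec_mulVec, ← Matrix.mulVec_mulVec, ← hw, Matrix.dotProduct_mulVec, ← hsw]
  push_cast
  simp only [dotProduct, Matrix.mulVec_diagonal, Function.comp_apply]
  refine Finset.sum_congr rfl fun j _ => ?_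
  rw [Complex.normSq_eq_conj_mul_self, Pi.star_apply, Complex.star_def, mul_left_comm]; norm_cast

lemma norm_eq (v : Fin n → ℂ) :
    star v ⬝ᵥ v = ((∑ j, Complex.normSq (v j) : ℝ) : ℂ) := by
  push_cast
  simp only [dotProduct, Pi.star_apply, Complex.star_def]
  exact Finset.sum_congr rfl fun j _ => by rw [Complex.normSq_eq_conj_mul_self]

end My

namespace My

variable {n : ℕ} {A B : Matrix (Fin n) (Fin n) ℂ}

lemma dot_conj {C M : Matrix (Fin n) (Fin n) ℂ} (hC : C.IsHermitian) (y : Fin n → ℂ) :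
    star (C *ᵥ y) ⬝ᵥ (M *ᵥ (C *ᵥ y)) = star y ⬝ᵥ ((C * M * C) *ᵥ y) := by
  rw [Matrix.star_mulVec, hC.eq, Matrix.mulVec_mulVec, Matrix.dotProduct_mulVec,
    Matrix.vecMul_vecMul, ← Matrix.dotProduct_mulVec, ← mul_assoc]

lemma unitary_norm_eq {U : Matrix (Fin n) (Fin n) ℂ} (hU : U * star U = 1) (v : Fin n → ℂ) :
    ((∑ j, Complex.normSq ((star U *ᵥ v) j) : ℝ) : ℂ) = star v ⬝ᵥ v := by
  rw [← norm_eq (star U *ᵥ v), Matrix.star_mulVec, Matrix.star_eq_conjTranspose,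
    Matrix.conjTranspose_conjTranspose, Matrix.dotProduct_mulVec, Matrix.vecMul_vecMul,
    show U * Uᴴ = 1 from by rw [← Matrix.star_eq_conjTranspose]; exact hU, Matrix.vecMul_one]

lemma gmean_facts (hA : A.PosDef) (hB : B.PosDef) :
    (gmean A⁻¹ B (1/2)).IsHermitian ∧ gmean A⁻¹ B (1/2) * A * gmean A⁻¹ B (1/2) = B := by
  have hR := mpow_posDef hA (1/2 : ℝ)
  have hN := mpow_posDef hA (-(1/2) : ℝ)
  have hRN : mpow A (1/2) * mpow A (-(1/2)) = 1 := mpow_mul_mpow_neg hA _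
  have hNR : mpow A (-(1/2)) * mpow A (1/2) = 1 := by
    have := mpow_mul_mpow_neg hA (-(1/2)); rwa [neg_neg] at this
  have hM : (mpow A (1/2) * B * mpow A (1/2)).PosDef := by
    have := posDef_conj hB hR.isUnit
    rwa [hR.1] at this
  have hS := mpow_posDef hM (1/2 : ℝ)
  have hgm : gmean A⁻¹ B (1/2) =
      mpow A (-(1/2)) * mpow (mpow A (1/2) * B * mpow A (1/2)) (1/2) * mpow A (-(1/2)) := by
    rw [gmean, mpow_inv hA, mpow_inv hA, neg_neg]
  constructor
  · rw [hgm]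
    have := Matrix.isHermitian_conjTranspose_mul_mul (mpow A (-(1/2))) hS.1
    rwa [hN.1] at this
  · rw [hgm]
    exact sandwich hNR hRN (mpow_half_mul_half hA) (mpow_half_mul_half hM)

end My


/-- if `A ⪯ B` in the near order then `λᵢ(A) ≤ λᵢ(B)` for every `i`. -/
theorem near_order_implies_eigenvalue_entrywise {n : ℕ} (A B : Matrix (Fin n) (Fin n) ℂ)
    (hA : A.PosDef) (hB : B.PosDef) (h : NearLE A B) :
    ∀ i : Fin n, eigDesc hA.1 i ≤ eigDesc hB.1 i := by
  intro i
  classical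
  obtain ⟨hC1, hCAC⟩ := My.gmean_facts hA hB
  set C := gmean A⁻¹ B (1/2) with hCdef
  have hCsub : (C - 1).PosSemidef := h
  have hC2 : (C * C - 1).PosSemidef := by
    have h1 := (Matrix.posSemidef_conjTranspose_mul_self (C - 1)).add (hCsub.add hCsub)
    have heq : (C - 1)ᴴ * (C - 1) + ((C - 1) + (C - 1)) = C * C - 1 := by
      rw [(hC1.sub Matrix.isHermitian_one).eq]
      noncomm_ring
    rwa [heq] at h1
  set U := (hA.1.eigenvectorUnitary : Matrix (Fin n) (Fin n) ℂ) with hUdef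
  set V := (hB.1.eigenvectorUnitary : Matrix (Fin n) (Fin n) ℂ) with hVdef
  have hU2 : U * star U = 1 := Matrix.mem_unitaryGroup_iff.mp hA.1.eigenvectorUnitary.2
  have hV2 : V * star V = 1 := Matrix.mem_unitaryGroup_iff.mp hB.1.eigenvectorUnitary.2
  set μ := hA.1.eigenvalues with hμdef
  set ν := hB.1.eigenvalues with hνdef
  set σ := Tuple.sort μ with hσdef
  set τ := Tuple.sort ν with hτdef
  -- the linear constraint map
  let Φ : (Fin n → ℂ) →ₗ[ℂ] ({k : Fin n // k ≠ i.rev} → ℂ) :=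
    { toFun := fun y k => if (k : Fin n) < i.rev
        then (star U *ᵥ (C *ᵥ y)) (σ k) else (star V *ᵥ y) (τ k)
      map_add' := fun y z => by
        funext k
        by_cases hk : (k : Fin n) < i.rev <;>
          simp [hk, Matrix.mulVec_add, Pi.add_apply]
      map_smul' := fun c y => by
        funext k
        by_cases hk : (k : Fin n) < i.rev <;>
          simp [hk, Matrix.mulVec_smul, Pi.smul_apply] }
  have hΦapp : ∀ (y : Fin n → ℂ) (k : {k : Fin n // k ≠ i.rev}), Φ y k =
      if (k : Fin n) < i.rev then (star U *ᵥ (C *ᵥ y)) (σ k) else (star V *ᵥ y) (τ k) :=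
    fun y k => rfl
  obtain ⟨y, hy0, hΦy⟩ : ∃ y : Fin n → ℂ, y ≠ 0 ∧ Φ y = 0 := by
    by_contra hcon
    push_neg at hcon
    have hinj : Function.Injective Φ := by
      rw [← LinearMap.ker_eq_bot, LinearMap.ker_eq_bot']
      intro y hy
      by_contra hy0
      exact hcon y hy0 hy
    have hle := LinearMap.finrank_le_finrank_of_injective hinj
    have hcard : Fintype.card {k : Fin n // k ≠ i.rev} = n - 1 := by
      simp [Fintype.card_subtype_compl, Fintype.card_subtype_eq]
    rw [Module.finrank_pi, Module.finrank_pi, hcard, Fintype.card_fin] at hle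
    have hn : 0 < n := i.pos
    omega
  set x := C *ᵥ y with hxdef
  set d := star U *ᵥ x with hddef
  set e := star V *ᵥ y with hedef
  have hd0 : ∀ k : Fin n, k < i.rev → d (σ k) = 0 := by
    intro k hk
    have h0 := congrFun hΦy ⟨k, ne_of_lt hk⟩
    rw [hΦapp, if_pos hk] at h0
    exact h0
  have he0 : ∀ k : Fin n, i.rev < k → e (τ k) = 0 := by
    intro k hk
    have h0 := congrFun hΦy ⟨k, (ne_of_lt hk).symm⟩
    rw [hΦapp, if_neg (not_lt_of_gt hk)] at h0
    exact h0
  -- the four key (in)equalities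
  have hSASB : ∑ j, μ j * Complex.normSq (d j) = ∑ j, ν j * Complex.normSq (e j) := by
    have h1 : star x ⬝ᵥ (A *ᵥ x) = ((∑ j, μ j * Complex.normSq (d j) : ℝ) : ℂ) := My.quad_eq hA.1 x
    have h2 : star y ⬝ᵥ (B *ᵥ y) = ((∑ j, ν j * Complex.normSq (e j) : ℝ) : ℂ) := My.quad_eq hB.1 y
    have h3 : star x ⬝ᵥ (A *ᵥ x) = star y ⬝ᵥ (B *ᵥ y) := by
      rw [hxdef, My.dot_conj hC1, hCAC]
    exact_mod_cast (h1.symm.trans h3).trans h2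
  have hnxny : ∑ j, Complex.normSq (e j) ≤ ∑ j, Complex.normSq (d j) := by
    have h1 : ((∑ j, Complex.normSq (d j) : ℝ) : ℂ) = star y ⬝ᵥ ((C * C) *ᵥ y) := by
      rw [hddef, My.unitary_norm_eq hU2 x, hxdef, show star (C *ᵥ y) ⬝ᵥ (C *ᵥ y)
          = star (C *ᵥ y) ⬝ᵥ (1 *ᵥ (C *ᵥ y)) from by rw [Matrix.one_mulVec],
        My.dot_conj hC1, mul_one]
    have h2 : ((∑ j, Complex.normSq (e j) : ℝ) : ℂ) = star y ⬝ᵥ y := by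
      rw [hedef, My.unitary_norm_eq hV2 y]
    have h3 : star y ⬝ᵥ ((C * C) *ᵥ y) - star y ⬝ᵥ y = star y ⬝ᵥ ((C * C - 1) *ᵥ y) := by
      rw [Matrix.sub_mulVec, dotProduct_sub, Matrix.one_mulVec]
    have h4 : (0 : ℂ) ≤ star y ⬝ᵥ ((C * C - 1) *ᵥ y) := hC2.dotProduct_mulVec_nonneg y
    rw [← h3, sub_nonneg, ← h1, ← h2] at h4
    exact_mod_cast h4
  have hny : 0 < ∑ j, Complex.normSq (e j) := by
    have hey : V *ᵥ e = y := by
      rw [hedef, Matrix.mulVec_mulVec, hV2, Matrix.one_mulVec]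
    have he_ne : e ≠ 0 := fun h0 => hy0 (by rw [← hey, h0, Matrix.mulVec_zero])
    obtain ⟨j, hj⟩ := Function.ne_iff.mp he_ne
    exact Finset.sum_pos' (fun j _ => Complex.normSq_nonneg _)
      ⟨j, Finset.mem_univ j, Complex.normSq_pos.mpr hj⟩
  have hSA : μ (σ i.rev) * ∑ j, Complex.normSq (d j) ≤ ∑ j, μ j * Complex.normSq (d j) := by
    rw [← Equiv.sum_comp σ (fun j => μ j * Complex.normSq (d j)),
      ← Equiv.sum_comp σ (fun j => Complex.normSq (d j)), Finset.mul_sum]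
    refine Finset.sum_le_sum fun k _ => ?_
    rcases lt_or_ge k i.rev with hk | hk
    · rw [hd0 k hk]; simp
    · exact mul_le_mul_of_nonneg_right (Tuple.monotone_sort μ hk) (Complex.normSq_nonneg _)
  have hSB : ∑ j, ν j * Complex.normSq (e j) ≤ ν (τ i.rev) * ∑ j, Complex.normSq (e j) := by
    rw [← Equiv.sum_comp τ (fun j => ν j * Complex.normSq (e j)),
      ← Equiv.sum_comp τ (fun j => Complex.normSq (e j)), Finset.mul_sum]
    refine Finset.sum_le_sum fun k _ => ?_
    rcases le_or_gt k i.rev with hk | hk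
    · exact mul_le_mul_of_nonneg_right (Tuple.monotone_sort ν hk) (Complex.normSq_nonneg _)
    · rw [he0 k hk]; simp
  have ha_pos : 0 < μ (σ i.rev) := hA.eigenvalues_pos _
  have hchain : μ (σ i.rev) * ∑ j, Complex.normSq (e j)
      ≤ ν (τ i.rev) * ∑ j, Complex.normSq (e j) :=
    le_trans (mul_le_mul_of_nonneg_left hnxny ha_pos.le) (le_trans hSA (hSASB ▸ hSB))
  have : μ (σ i.rev) ≤ ν (τ i.rev) := le_of_mul_le_mul_right hchain hny
  simpa [eigDesc, hμdef, hνdef, hσdef, hτdef] using this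
end
end

section
/- Let A, P, Q be n×n complex positive definite matrices with PQ = QP. Then P ≤ Q in the Loewner order if and only if PAP ⪯ QAQ in the near order. -/
open scoped ComplexOrder Matrix

noncomputable section

section Helpers

variable {n : ℕ}

private lemma contOn (f : ℝ → ℝ) (A : Matrix (Fin n) (Fin n) ℂ) :
    ContinuousOn f (spectrum ℝ A) :=
  (Matrix.finite_real_spectrum (A := A)).continuousOn f

private lemma sa {A : Matrix (Fin n) (Fin n) ℂ} (h : A.IsHermitian) : IsSelfAdjoint A := h

private lemma spec_pos {A : Matrix (Fin n) (Fin n) ℂ} (hA : A.PosDef) :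
    ∀ x ∈ spectrum ℝ A, 0 < x := by
  intro x hx
  rw [hA.isHermitian.spectrum_real_eq_range_eigenvalues] at hx
  obtain ⟨i, rfl⟩ := hx
  exact hA.eigenvalues_pos i

private lemma posDef_conj' {A : Matrix (Fin n) (Fin n) ℂ} (hA : A.PosDef)
    (B : Matrix (Fin n) (Fin n) ℂ) (hB : IsUnit B) : (Bᴴ * A * B).PosDef := by
  constructor
  · exact Matrix.isHermitian_conjTranspose_mul_mul B hA.1
  · exact (hA.conjTranspose_mul_mul_same (Matrix.mulVec_injective_iff_isUnit.mpr hB)).2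

private lemma posDef_conj {A : Matrix (Fin n) (Fin n) ℂ} (hA : A.PosDef)
    (B : Matrix (Fin n) (Fin n) ℂ) (hB : IsUnit B) : (B * A * Bᴴ).PosDef := by
  have hB' : IsUnit Bᴴ := by
    rw [Matrix.isUnit_iff_isUnit_det, Matrix.det_conjTranspose]
    exact ((Matrix.isUnit_iff_isUnit_det B).mp hB).star
  simpa only [Matrix.conjTranspose_conjTranspose] using posDef_conj' hA Bᴴ hB'

private lemma mpow_herm (A : Matrix (Fin n) (Fin n) ℂ) (t : ℝ) : (mpow A t)ᴴ = mpow A t := by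
  have h : IsSelfAdjoint (mpow A t) := cfc_predicate _ A
  rw [← Matrix.star_eq_conjTranspose]
  exact h.star_eq

private lemma mpow_posDef {A : Matrix (Fin n) (Fin n) ℂ} (hA : A.PosDef) (t : ℝ) :
    (mpow A t).PosDef := by
  have hH := hA.1
  rw [mpow, hH.cfc_eq, Matrix.IsHermitian.cfc]
  have hdiag : (Matrix.diagonal (RCLike.ofReal ∘ (fun x : ℝ => x ^ t) ∘ hH.eigenvalues) :
      Matrix (Fin n) (Fin n) ℂ).PosDef := by
    apply Matrix.PosDef.diagonal
    intro i
    simp only [Function.comp_apply]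
    rw [RCLike.ofReal_pos]
    exact Real.rpow_pos_of_pos (hA.eigenvalues_pos i) t
  have hU : IsUnit (Matrix.IsHermitian.eigenvectorUnitary hH : Matrix (Fin n) (Fin n) ℂ) := by
    exact ⟨Unitary.toUnits (Matrix.IsHermitian.eigenvectorUnitary hH), rfl⟩
  have := posDef_conj hdiag (Matrix.IsHermitian.eigenvectorUnitary hH : Matrix (Fin n) (Fin n) ℂ) hU
  rw [Unitary.conjStarAlgAut_apply, Matrix.star_eq_conjTranspose]
  exact this

private lemma mpow_add {A : Matrix (Fin n) (Fin n) ℂ} (hA : A.PosDef) (s t : ℝ) :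
    mpow A s * mpow A t = mpow A (s + t) := by
  rw [mpow, mpow, mpow, ← cfc_mul _ _ A (contOn _ A) (contOn _ A)]
  exact cfc_congr fun x hx => (Real.rpow_add (spec_pos hA x hx) s t).symm

private lemma mpow_zero {A : Matrix (Fin n) (Fin n) ℂ} (hA : A.PosDef) : mpow A 0 = 1 := by
  rw [mpow]
  have h : cfc (fun x : ℝ => x ^ (0 : ℝ)) A = cfc (1 : ℝ → ℝ) A := by
    apply cfc_congr
    intro x _
    simp [Real.rpow_zero]
  rw [h, cfc_one ℝ A (sa hA.1)]

private lemma mpow_one_eq {A : Matrix (Fin n) (Fin n) ℂ} (hA : A.PosDef) : mpow A 1 = A := by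
  rw [mpow]
  have h : cfc (fun x : ℝ => x ^ (1 : ℝ)) A = cfc (fun x : ℝ => x) A := by
    apply cfc_congr
    intro x _
    simp [Real.rpow_one]
  rw [h, cfc_id' ℝ A (sa hA.1)]

private lemma mpow_neg_one {A : Matrix (Fin n) (Fin n) ℂ} (hA : A.PosDef) :
    mpow A (-1) = A⁻¹ := by
  symm
  apply Matrix.inv_eq_left_inv
  calc mpow A (-1) * A = mpow A (-1) * mpow A 1 := by rw [mpow_one_eq hA]
    _ = mpow A (-1 + 1) := mpow_add hA _ _
    _ = 1 := by norm_num [mpow_zero hA]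

private lemma commute_aeval {B C : Matrix (Fin n) (Fin n) ℂ} (h : Commute B C)
    (q : Polynomial ℝ) : Commute (Polynomial.aeval B q) C := by
  induction q using Polynomial.induction_on' with
  | add p q hp hq => simpa [map_add] using hp.add_left hq
  | monomial m r =>
      rw [Polynomial.aeval_monomial]
      exact (Algebra.commute_algebraMap_left r C).mul_left (h.pow_left m)

private lemma commute_cfc {B C : Matrix (Fin n) (Fin n) ℂ} (hB : B.IsHermitian)
    (h : Commute B C) (f : ℝ → ℝ) : Commute (cfc f B) C := by
  classical
  have hfin := B.finite_real_spectrum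
  set s := hfin.toFinset with hs
  set q := Lagrange.interpolate s id f with hq
  have h1 : cfc f B = cfc q.eval B := by
    apply cfc_congr
    intro x hx
    have hxs : x ∈ s := hfin.mem_toFinset.mpr hx
    exact (Lagrange.eval_interpolate_at_node f (Set.injOn_id _) hxs).symm
  rw [h1, cfc_polynomial q B (sa hB)]
  exact commute_aeval h q

open scoped MatrixOrder in
private lemma riccati_unique {X Z G : Matrix (Fin n) (Fin n) ℂ} (hX : X.PosDef)
    (hZ : Z.PosDef) (hG : G.PosDef) (h : Z * X * Z = G * X * G) : Z = G := by
  set T := CFC.sqrt X with hTdef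
  have hT : T.PosSemidef := Matrix.nonneg_iff_posSemidef.mp (CFC.sqrt_nonneg X)
  have hTh : Tᴴ = T := hT.isHermitian.eq
  have hTT : T * T = X := CFC.sqrt_mul_sqrt_self X hX.posSemidef.nonneg
  have hTdet : IsUnit T.det := by
    have : T.det * T.det = X.det := by rw [← Matrix.det_mul, hTT]
    have hXdet : IsUnit X.det := (Matrix.isUnit_iff_isUnit_det X).mp hX.isUnit
    rw [← this] at hXdet
    exact isUnit_of_mul_isUnit_left hXdet
  have key : ∀ W : Matrix (Fin n) (Fin n) ℂ, (T * W * T) ^ 2 = T * (W * X * W) * T := by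
    intro W
    rw [pow_two, ← hTT]
    simp only [mul_assoc]
  have h1 : (T * Z * T).PosSemidef := by
    have := hZ.posSemidef.mul_mul_conjTranspose_same T
    rwa [hTh] at this
  have h2 : (T * G * T).PosSemidef := by
    have := hG.posSemidef.mul_mul_conjTranspose_same T
    rwa [hTh] at this
  have hsq : (T * Z * T) ^ 2 = (T * G * T) ^ 2 := by rw [key, key, h]
  have heq : T * Z * T = T * G * T := by
    rw [← CFC.sqrt_sq (T * Z * T) h1.nonneg, hsq, CFC.sqrt_sq _ h2.nonneg]
  calc Z = (T⁻¹ * T) * Z * (T * T⁻¹) := by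
        rw [Matrix.nonsing_inv_mul _ hTdet, Matrix.mul_nonsing_inv _ hTdet, one_mul, mul_one]
    _ = T⁻¹ * (T * Z * T) * T⁻¹ := by simp only [mul_assoc]
    _ = T⁻¹ * (T * G * T) * T⁻¹ := by rw [heq]
    _ = (T⁻¹ * T) * G * (T * T⁻¹) := by simp only [mul_assoc]
    _ = G := by
        rw [Matrix.nonsing_inv_mul _ hTdet, Matrix.mul_nonsing_inv _ hTdet, one_mul, mul_one]

end Helpers

/-- for positive definite commuting `P, Q` and positive definite `A`,
`P ≤ Q` (Loewner) iff `PAP ⪯ QAQ` (near order). -/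
theorem posdef_congruence_near_order {n : ℕ} (A P Q : Matrix (Fin n) (Fin n) ℂ)
    (hA : A.PosDef) (hP : P.PosDef) (hQ : Q.PosDef) (hPQ : P * Q = Q * P) :
    LoewnerLE P Q ↔ NearLE (P * A * P) (Q * A * Q) := by
  classical
  set X := P * A * P with hXdef
  set Y := Q * A * Q with hYdef
  have hPdet : IsUnit P.det := (Matrix.isUnit_iff_isUnit_det P).mp hP.isUnit
  have hX : X.PosDef := by
    have := posDef_conj hA P hP.isUnit
    rwa [hP.1.eq] at this
  have hY : Y.PosDef := by
    have := posDef_conj hA Q hQ.isUnit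
    rwa [hQ.1.eq] at this
  have hXdet : IsUnit X.det := (Matrix.isUnit_iff_isUnit_det X).mp hX.isUnit
  have hS : X⁻¹.PosDef := hX.inv
  -- notation for the pieces of the geometric mean
  set u := mpow X⁻¹ (1/2) with hu
  set v := mpow X⁻¹ (-(1/2)) with hv
  have hupd : u.PosDef := mpow_posDef hS _
  have hvpd : v.PosDef := mpow_posDef hS _
  have hM0 : (v * Y * v).PosDef := by
    have := posDef_conj hY v hvpd.isUnit
    rwa [mpow_herm] at this
  set W := mpow (v * Y * v) (1/2) with hW
  have hWpd : W.PosDef := mpow_posDef hM0 _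
  have hZeq : gmean X⁻¹ Y (1/2) = u * W * u := rfl
  have huv : u * v = 1 := by
    rw [hu, hv, mpow_add hS]
    norm_num [mpow_zero hS]
  have hvu : v * u = 1 := by
    rw [hu, hv, mpow_add hS]
    norm_num [mpow_zero hS]
  have hXmpow : X = mpow X⁻¹ (-1) := by
    rw [mpow_neg_one hS, Matrix.nonsing_inv_nonsing_inv _ hXdet]
  have huXu : u * X * u = 1 := by
    rw [hXmpow, hu, mpow_add hS, mpow_add hS]
    norm_num [mpow_zero hS]
  have hWW : W * W = v * Y * v := by
    rw [hW, mpow_add hM0]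
    norm_num [mpow_one_eq hM0]
  have hZpd : (gmean X⁻¹ Y (1/2)).PosDef := by
    rw [hZeq]
    have := posDef_conj (mpow_posDef hM0 (1/2)) u hupd.isUnit
    rwa [mpow_herm] at this
  have hZXZ : gmean X⁻¹ Y (1/2) * X * gmean X⁻¹ Y (1/2) = Y := by
    rw [hZeq]
    calc u * W * u * X * (u * W * u) = u * W * (u * X * u) * W * u := by
          simp only [mul_assoc]
      _ = u * (W * W) * u := by rw [huXu, mul_one]; simp only [mul_assoc]
      _ = u * (v * Y * v) * u := by rw [hWW]
      _ = (u * v) * Y * (v * u) := by simp only [mul_assoc]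
      _ = Y := by rw [huv, hvu, one_mul, mul_one]
  -- the commuting square-root pieces of P
  set R := mpow P (-(1/2)) with hR
  set R' := mpow P (1/2) with hR'
  have hRpd : R.PosDef := mpow_posDef hP _
  have hRQ : R * Q = Q * R := commute_cfc hP.1 hPQ _
  have hRR : R * R = P⁻¹ := by
    rw [hR, mpow_add hP]
    norm_num [mpow_neg_one hP]
  have hG_eq : R * Q * R = Q * P⁻¹ := by
    rw [hRQ, mul_assoc, hRR]
  have hGpd : (Q * P⁻¹).PosDef := by
    rw [← hG_eq]
    have := posDef_conj hQ R hRpd.isUnit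
    rwa [mpow_herm] at this
  have hPP : P * P⁻¹ = 1 := Matrix.mul_nonsing_inv _ hPdet
  have hPinv : P⁻¹ * P = 1 := Matrix.nonsing_inv_mul _ hPdet
  have hGXG : (Q * P⁻¹) * X * (Q * P⁻¹) = Y := by
    have c1 : P * (Q * P⁻¹) = Q := by rw [← mul_assoc, hPQ, mul_assoc, hPP, mul_one]
    have c2 : P⁻¹ * (P * (A * Q)) = A * Q := by rw [← mul_assoc, hPinv, one_mul]
    calc (Q * P⁻¹) * X * (Q * P⁻¹) = Q * (P⁻¹ * (P * (A * (P * (Q * P⁻¹))))) := by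
          rw [hXdef]; simp only [mul_assoc]
      _ = Q * (P⁻¹ * (P * (A * Q))) := by rw [c1]
      _ = Q * (A * Q) := by rw [c2]
      _ = Y := by rw [hYdef, mul_assoc]
  have hZG : gmean X⁻¹ Y (1/2) = Q * P⁻¹ :=
    riccati_unique hX hZpd hGpd (hZXZ.trans hGXG.symm)
  -- assemble
  have hRPR : R * P * R = 1 := by
    have h1 : R * P = R * mpow P 1 := by rw [mpow_one_eq hP]
    rw [h1, hR, mpow_add hP, mpow_add hP]
    norm_num [mpow_zero hP]
  have hdiff : Q * P⁻¹ - 1 = R * (Q - P) * R := by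
    rw [mul_sub, sub_mul, hG_eq, hRPR]
  have hRR' : R * R' = 1 := by
    rw [hR, hR', mpow_add hP]
    norm_num [mpow_zero hP]
  have hR'R : R' * R = 1 := by
    rw [hR, hR', mpow_add hP]
    norm_num [mpow_zero hP]
  have hiff : (Q - P).PosSemidef ↔ (R * (Q - P) * R).PosSemidef := by
    constructor
    · intro h
      have := h.mul_mul_conjTranspose_same R
      rwa [mpow_herm] at this
    · intro h
      have := h.mul_mul_conjTranspose_same R'
      rw [mpow_herm] at this
      have e : R' * (R * (Q - P) * R) * R' = Q - P := by
        calc R' * (R * (Q - P) * R) * R' = (R' * R) * (Q - P) * (R * R') := by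
              simp only [mul_assoc]
          _ = Q - P := by rw [hR'R, hRR', one_mul, mul_one]
      rwa [e] at this
  show LoewnerLE P Q ↔ NearLE X Y
  rw [NearLE, hZG]
  show (Q - P).PosSemidef ↔ (Q * P⁻¹ - 1).PosSemidef
  rw [hdiff]
  exact hiff
end
end

section
/- Let A, B be n×n complex positive definite matrices. (1) If A ⪯ B in the near order, then for all t, s ∈ [0, ∞): A ◇_t (A ◇_s B) = A ◇_{ts} B. (2) If B ⪯ A in the near order, then for all t, s ∈ (−∞, 1]: (A ◇_s B) ◇_t B = A ◇_{(1−t)s + t} B. -/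
open scoped ComplexOrder Matrix

noncomputable section

namespace WGeoAux

variable {n : ℕ}

lemma herm_sa {A : Matrix (Fin n) (Fin n) ℂ} (h : A.IsHermitian) : IsSelfAdjoint A := h

lemma sa_herm {A : Matrix (Fin n) (Fin n) ℂ} (h : IsSelfAdjoint A) : A.IsHermitian := h

lemma spectrum_pos {A : Matrix (Fin n) (Fin n) ℂ} (hA : A.PosDef) :
    ∀ x ∈ spectrum ℝ A, 0 < x := by
  intro x hx
  rw [Matrix.IsHermitian.spectrum_real_eq_range_eigenvalues hA.1] at hx
  obtain ⟨i, rfl⟩ := hx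
  exact hA.eigenvalues_pos i

lemma posDef_conj {A C : Matrix (Fin n) (Fin n) ℂ} (hA : A.PosDef) (hC : IsUnit C) :
    (Cᴴ * A * C).PosDef := by
  refine Matrix.PosDef.of_dotProduct_mulVec_pos (Matrix.isHermitian_conjTranspose_mul_mul C hA.1) fun x hx => ?_
  have hinj := Matrix.mulVec_injective_iff_isUnit.mpr hC
  have h1 : C *ᵥ x ≠ 0 := fun h => hx (hinj (h.trans (Matrix.mulVec_zero C).symm))
  simpa only [Matrix.star_mulVec, Matrix.dotProduct_mulVec, Matrix.vecMul_vecMul]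
    using hA.dotProduct_mulVec_pos h1

lemma posDef_of_spectrum {A : Matrix (Fin n) (Fin n) ℂ} (hH : A.IsHermitian)
    (h : ∀ x ∈ spectrum ℝ A, 0 < x) : A.PosDef := by
  have he : ∀ i, 0 < hH.eigenvalues i := fun i =>
    h _ (by rw [hH.spectrum_real_eq_range_eigenvalues]; exact ⟨i, rfl⟩)
  have hD : (Matrix.diagonal (RCLike.ofReal ∘ hH.eigenvalues) :
      Matrix (Fin n) (Fin n) ℂ).PosDef := by
    rw [Matrix.posDef_diagonal_iff]
    intro i
    simpa using he i
  have h1 : (hH.eigenvectorUnitary : Matrix (Fin n) (Fin n) ℂ) *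
      star (hH.eigenvectorUnitary : Matrix (Fin n) (Fin n) ℂ) = 1 :=
    Matrix.mem_unitaryGroup_iff.mp hH.eigenvectorUnitary.2
  have h2 : star (hH.eigenvectorUnitary : Matrix (Fin n) (Fin n) ℂ) *
      (hH.eigenvectorUnitary : Matrix (Fin n) (Fin n) ℂ) = 1 :=
    Matrix.mem_unitaryGroup_iff'.mp hH.eigenvectorUnitary.2
  have hU : IsUnit (star (hH.eigenvectorUnitary : Matrix (Fin n) (Fin n) ℂ)) :=
    ⟨⟨_, (hH.eigenvectorUnitary : Matrix (Fin n) (Fin n) ℂ), h2, h1⟩, rfl⟩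
  have := posDef_conj hD hU
  rw [show (star (hH.eigenvectorUnitary : Matrix (Fin n) (Fin n) ℂ))ᴴ =
    (hH.eigenvectorUnitary : Matrix (Fin n) (Fin n) ℂ) from star_star _] at this
  rw [hH.spectral_theorem]
  exact this

lemma cfc_posDef {A : Matrix (Fin n) (Fin n) ℂ} {f : ℝ → ℝ} (hA : A.PosDef)
    (hf : ContinuousOn f (spectrum ℝ A)) (hpos : ∀ x ∈ spectrum ℝ A, 0 < f x) :
    (cfc f A).PosDef := by
  refine posDef_of_spectrum (sa_herm (cfc_predicate f A)) ?_
  rw [cfc_map_spectrum f A (herm_sa hA.1) hf]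
  rintro x ⟨y, hy, rfl⟩
  exact hpos y hy

lemma contOn_rpow {s : Set ℝ} (hs : ∀ x ∈ s, 0 < x) (t : ℝ) :
    ContinuousOn (fun x : ℝ => x ^ t) s := fun x hx =>
  (Real.continuousAt_rpow_const x t (Or.inl (hs x hx).ne')).continuousWithinAt

lemma one_le_spectrum {X : Matrix (Fin n) (Fin n) ℂ} (hX : X.PosDef)
    (h : (X - 1).PosSemidef) : ∀ x ∈ spectrum ℝ X, 1 ≤ x := by
  intro x hx
  rw [Matrix.IsHermitian.spectrum_real_eq_range_eigenvalues hX.1] at hx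
  obtain ⟨i, rfl⟩ := hx
  set v : Fin n → ℂ := ⇑(hX.1.eigenvectorBasis i) with hv
  have hv0 : v ≠ 0 := by
    have hne := hX.1.eigenvectorBasis.orthonormal.ne_zero i
    intro hcontra
    apply hne
    ext j
    exact congrFun hcontra j
  have hmul : X *ᵥ v = hX.1.eigenvalues i • v := hX.1.mulVec_eigenvectorBasis i
  have h2 := h.dotProduct_mulVec_nonneg v
  rw [Matrix.sub_mulVec, Matrix.one_mulVec, dotProduct_sub, hmul,
    dotProduct_smul] at h2
  have hc : 0 < dotProduct (star v) v := Matrix.dotProduct_star_self_pos_iff.mpr hv0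
  set c := dotProduct (star v) v with hcdef
  have hcre : 0 < c.re ∧ c.im = 0 := by
    rw [Complex.lt_def] at hc
    simpa using ⟨hc.1, hc.2.symm⟩
  have h3 : 0 ≤ (hX.1.eigenvalues i - 1) * c.re := by
    rw [Complex.le_def] at h2
    have h4 := h2.1
    simp only [Complex.real_smul, Complex.sub_re, Complex.mul_re, Complex.ofReal_re,
      Complex.ofReal_im, Complex.zero_re, hcre.2] at h4
    nlinarith [h4]
  nlinarith [hcre.1, h3]


variable {A B : Matrix (Fin n) (Fin n) ℂ}

lemma mpow_posDef (hA : A.PosDef) (t : ℝ) : (mpow A t).PosDef := by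
  rw [mpow]
  exact cfc_posDef hA (contOn_rpow (spectrum_pos hA) t)
    (fun x hx => Real.rpow_pos_of_pos (spectrum_pos hA x hx) t)

lemma mpow_add (hA : A.PosDef) (s t : ℝ) : mpow A s * mpow A t = mpow A (s + t) := by
  rw [mpow, mpow, mpow,
    ← cfc_mul _ _ A (contOn_rpow (spectrum_pos hA) s) (contOn_rpow (spectrum_pos hA) t)]
  exact cfc_congr fun x hx => (Real.rpow_add (spectrum_pos hA x hx) s t).symm

lemma mpow_zero (hA : A.PosDef) : mpow A 0 = 1 := by
  rw [mpow]
  have h1 : cfc (fun x : ℝ => x ^ (0:ℝ)) A = cfc (fun _ : ℝ => (1:ℝ)) A :=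
    cfc_congr fun x _ => Real.rpow_zero x
  rw [h1]
  exact cfc_const_one ℝ A (herm_sa hA.1)

lemma mpow_one (hA : A.PosDef) : mpow A 1 = A := by
  rw [mpow]
  have h1 : cfc (fun x : ℝ => x ^ (1:ℝ)) A = cfc (fun x : ℝ => x) A :=
    cfc_congr fun x _ => Real.rpow_one x
  rw [h1]
  exact cfc_id' ℝ A (herm_sa hA.1)

lemma mpow_mul (hA : A.PosDef) (s t : ℝ) : mpow (mpow A s) t = mpow A (s * t) := by
  have him : ∀ x ∈ (fun x : ℝ => x ^ s) '' spectrum ℝ A, 0 < x := by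
    rintro x ⟨y, hy, rfl⟩
    exact Real.rpow_pos_of_pos (spectrum_pos hA y hy) s
  have hcomp := cfc_comp (fun x : ℝ => x ^ t) (fun x : ℝ => x ^ s) A (herm_sa hA.1)
    (contOn_rpow him t) (contOn_rpow (spectrum_pos hA) s)
  rw [mpow, mpow, mpow, ← hcomp]
  exact cfc_congr fun x hx => by
    simp only [Function.comp]
    rw [← Real.rpow_mul (spectrum_pos hA x hx).le]

lemma inv_eq_mpow (hA : A.PosDef) : A⁻¹ = mpow A (-1) := by
  refine Matrix.inv_eq_left_inv ?_
  have h : mpow A (-1) * mpow A 1 = 1 := by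
    rw [mpow_add hA]; norm_num; exact mpow_zero hA
  rwa [mpow_one hA] at h

lemma mpow_inv (hA : A.PosDef) (t : ℝ) : mpow A⁻¹ t = mpow A (-t) := by
  rw [inv_eq_mpow hA, mpow_mul hA]
  norm_num

lemma mpow_sqrt_sq (hA : A.PosDef) : mpow (A * A) (1/2 : ℝ) = A := by
  have h2 : mpow A 2 = A * A := by
    rw [mpow]
    have h1 : cfc (fun x : ℝ => x ^ (2:ℝ)) A = cfc (fun x : ℝ => x * x) A :=
      cfc_congr fun x _ => by
        rw [show ((2:ℝ) = ((2:ℕ):ℝ)) by norm_num, Real.rpow_natCast]; ring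
    rw [h1, cfc_mul (fun x : ℝ => x) (fun x : ℝ => x) A continuousOn_id continuousOn_id,
      cfc_id' ℝ A (herm_sa hA.1)]
  rw [← h2, mpow_mul hA]
  norm_num
  exact mpow_one hA

lemma riccati (hA : A.PosDef) {M : Matrix (Fin n) (Fin n) ℂ} (hM : M.PosDef) :
    gmean A⁻¹ (M * A * M) (1/2) = M := by
  rw [gmean, mpow_inv hA, mpow_inv hA, neg_neg]
  set R := mpow A (1/2) with hRdef
  set R' := mpow A (-(1/2)) with hR'def
  have hRpd : R.PosDef := mpow_posDef hA _
  have hR'pd : R'.PosDef := mpow_posDef hA _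
  have hRR : R * R = A := by
    rw [hRdef, mpow_add hA]; norm_num; exact mpow_one hA
  have hL : R' * R = 1 := by
    rw [hRdef, hR'def, mpow_add hA]; norm_num; exact mpow_zero hA
  have hL2 : R * R' = 1 := by
    rw [hRdef, hR'def, mpow_add hA]; norm_num; exact mpow_zero hA
  have hRMR : (R * M * R).PosDef := by
    have := posDef_conj hM hRpd.isUnit
    rwa [hRpd.1] at this
  have hinner : R * (M * A * M) * R = (R * M * R) * (R * M * R) := by
    rw [← hRR]; noncomm_ring
  rw [hinner, mpow_sqrt_sq hRMR]
  calc R' * (R * M * R) * R' = (R' * R) * M * (R * R') := by noncomm_ring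
    _ = M := by rw [hL, hL2, one_mul, mul_one]

lemma gmean_posDef (hA : A.PosDef) (hB : B.PosDef) : (gmean A⁻¹ B (1/2)).PosDef := by
  rw [gmean, mpow_inv hA, mpow_inv hA, neg_neg]
  set R := mpow A (1/2) with hRdef
  set R' := mpow A (-(1/2)) with hR'def
  have hRpd : R.PosDef := mpow_posDef hA _
  have hR'pd : R'.PosDef := mpow_posDef hA _
  have hW : (R * B * R).PosDef := by
    have := posDef_conj hB hRpd.isUnit
    rwa [hRpd.1] at this
  have hZpd : (mpow (R * B * R) (1/2)).PosDef := mpow_posDef hW _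
  have := posDef_conj hZpd hR'pd.isUnit
  rwa [hR'pd.1] at this

lemma gmean_sol (hA : A.PosDef) (hB : B.PosDef) :
    gmean A⁻¹ B (1/2) * A * gmean A⁻¹ B (1/2) = B := by
  rw [gmean, mpow_inv hA, mpow_inv hA, neg_neg]
  set R := mpow A (1/2) with hRdef
  set R' := mpow A (-(1/2)) with hR'def
  have hRpd : R.PosDef := mpow_posDef hA _
  have hW : (R * B * R).PosDef := by
    have := posDef_conj hB hRpd.isUnit
    rwa [hRpd.1] at this
  set Z := mpow (R * B * R) (1/2) with hZdef
  have hZZ : Z * Z = R * B * R := by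
    rw [hZdef, mpow_add hW]; norm_num; exact mpow_one hW
  have hL : R' * R = 1 := by
    rw [hRdef, hR'def, mpow_add hA]; norm_num; exact mpow_zero hA
  have hL2 : R * R' = 1 := by
    rw [hRdef, hR'def, mpow_add hA]; norm_num; exact mpow_zero hA
  have hR'AR' : R' * A * R' = 1 := by
    have hA1 : R' * mpow A 1 * R' = 1 := by
      rw [hR'def, mpow_add hA, mpow_add hA]; norm_num; exact mpow_zero hA
    rwa [mpow_one hA] at hA1
  calc (R' * Z * R') * A * (R' * Z * R')
      = R' * (Z * (R' * A * R') * Z) * R' := by noncomm_ring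
    _ = R' * (Z * Z) * R' := by rw [hR'AR']; noncomm_ring
    _ = (R' * R) * B * (R * R') := by rw [hZZ]; noncomm_ring
    _ = B := by rw [hL, hL2, one_mul, mul_one]

lemma affine_cfc' {S : Matrix (Fin n) (Fin n) ℂ} (hS : S.PosDef) {g : ℝ → ℝ}
    (hg : ContinuousOn g (spectrum ℝ S)) (a b : ℝ) :
    cfc (fun x : ℝ => a + b * g x) S
      = ((a : ℝ) : ℂ) • (1 : Matrix (Fin n) (Fin n) ℂ) + ((b : ℝ) : ℂ) • cfc g S := by
  have hsa := herm_sa hS.1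
  have h1 : cfc (fun x : ℝ => a + b * g x) S
      = cfc (fun _ : ℝ => a) S + cfc (fun x : ℝ => b * g x) S :=
    cfc_add (a := S) (f := fun _ : ℝ => a) (g := fun x : ℝ => b * g x)
      continuousOn_const (continuousOn_const.mul hg)
  have h2 : cfc (fun x : ℝ => b * g x) S = b • cfc g S := cfc_const_mul b g S hg
  have h3 : cfc (fun _ : ℝ => a) S = algebraMap ℝ _ a := cfc_const a S hsa
  rw [h1, h2, h3, Algebra.algebraMap_eq_smul_one, Complex.coe_smul, Complex.coe_smul]

lemma affine_cfc {S : Matrix (Fin n) (Fin n) ℂ} (hS : S.PosDef) (a b : ℝ) :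
    cfc (fun x : ℝ => a + b * x) S
      = ((a : ℝ) : ℂ) • (1 : Matrix (Fin n) (Fin n) ℂ) + ((b : ℝ) : ℂ) • S := by
  have h := affine_cfc' hS (g := fun x : ℝ => x) continuousOn_id a b
  rwa [cfc_id' ℝ S (herm_sa hS.1)] at h

end WGeoAux

/-- (1) if `A ⪯ B` then `A ◇ₜ (A ◇ₛ B) = A ◇_{ts} B` for `t, s ≥ 0`;
(2) if `B ⪯ A` then `(A ◇ₛ B) ◇ₜ B = A ◇_{(1−t)s+t} B` for `t, s ≤ 1`. -/
theorem wmean_geodesic_property {n : ℕ} (A B : Matrix (Fin n) (Fin n) ℂ)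
    (hA : A.PosDef) (hB : B.PosDef) :
    (NearLE A B → ∀ t s : ℝ, 0 ≤ t → 0 ≤ s →
      wmean A (wmean A B s) t = wmean A B (t * s)) ∧
    (NearLE B A → ∀ t s : ℝ, t ≤ 1 → s ≤ 1 →
      wmean (wmean A B s) B t = wmean A B ((1 - t) * s + t)) := by
  classical
  have hS : (gmean A⁻¹ B (1/2)).PosDef := WGeoAux.gmean_posDef hA hB
  have hSAS : gmean A⁻¹ B (1/2) * A * gmean A⁻¹ B (1/2) = B := WGeoAux.gmean_sol hA hB
  set S := gmean A⁻¹ B (1/2) with hSdef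
  have hsaS : IsSelfAdjoint S := WGeoAux.herm_sa hS.1
  constructor
  · -- Part 1
    intro hnear t s ht hs
    have hnear' : (S - 1).PosSemidef := hnear
    have hspec : ∀ x ∈ spectrum ℝ S, 1 ≤ x := WGeoAux.one_le_spectrum hS hnear'
    have hfpos : ∀ x ∈ spectrum ℝ S, 0 < (1 - s) + s * x := by
      intro x hx
      nlinarith [mul_nonneg hs (sub_nonneg.mpr (hspec x hx))]
    have hMc : cfc (fun x : ℝ => (1 - s) + s * x) S
        = ((1 - s : ℝ) : ℂ) • 1 + ((s : ℝ) : ℂ) • S := WGeoAux.affine_cfc hS (1 - s) s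
    set M : Matrix (Fin n) (Fin n) ℂ := ((1 - s : ℝ) : ℂ) • 1 + ((s : ℝ) : ℂ) • S with hMdef
    have hM : M.PosDef := by
      rw [← hMc]
      exact WGeoAux.cfc_posDef hS
        (continuousOn_const.add (continuousOn_const.mul continuousOn_id)) hfpos
    have hw : wmean A B s = M * A * M := rfl
    have hkey : gmean A⁻¹ (wmean A B s) (1/2) = M := by
      rw [hw]; exact WGeoAux.riccati hA hM
    have e1 : ((1 - t : ℝ) : ℂ) + ((t : ℝ) : ℂ) * ((1 - s : ℝ) : ℂ)
        = ((1 - t * s : ℝ) : ℂ) := by push_cast; ring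
    have e2 : ((t : ℝ) : ℂ) * ((s : ℝ) : ℂ) = ((t * s : ℝ) : ℂ) := by push_cast; ring
    have hfac : ((1 - t : ℝ) : ℂ) • (1 : Matrix (Fin n) (Fin n) ℂ) + ((t : ℝ) : ℂ) • M
        = ((1 - t * s : ℝ) : ℂ) • 1 + ((t * s : ℝ) : ℂ) • S := by
      rw [hMdef, smul_add, smul_smul, smul_smul, ← add_assoc, ← add_smul, e1, e2]
    calc wmean A (wmean A B s) t
        = (((1 - t : ℝ) : ℂ) • 1 + ((t : ℝ) : ℂ) • gmean A⁻¹ (wmean A B s) (1/2)) * A *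
          (((1 - t : ℝ) : ℂ) • 1 + ((t : ℝ) : ℂ) • gmean A⁻¹ (wmean A B s) (1/2)) := rfl
      _ = (((1 - t * s : ℝ) : ℂ) • 1 + ((t * s : ℝ) : ℂ) • S) * A *
          (((1 - t * s : ℝ) : ℂ) • 1 + ((t * s : ℝ) : ℂ) • S) := by rw [hkey, hfac]
      _ = wmean A B (t * s) := rfl
  · -- Part 2
    intro hnear t s ht hs
    have hSinv : (S⁻¹).PosDef := hS.inv
    haveI := hS.isUnit.invertible
    have hAeq : A = S⁻¹ * B * S⁻¹ := by
      rw [← hSAS]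
      have h1 : S⁻¹ * (S * A * S) * S⁻¹ = S⁻¹ * S * A * (S * S⁻¹) := by noncomm_ring
      rw [h1, Matrix.inv_mul_of_invertible, Matrix.mul_inv_of_invertible, one_mul, mul_one]
    have hT : gmean B⁻¹ A (1/2) = S⁻¹ := by
      rw [hAeq]; exact WGeoAux.riccati hB hSinv
    have hnear' : (S⁻¹ - 1).PosSemidef := by
      have h2 : (gmean B⁻¹ A (1/2) - 1).PosSemidef := hnear
      rwa [hT] at h2
    have hinvspec := WGeoAux.one_le_spectrum hSinv hnear'
    have hle1 : ∀ x ∈ spectrum ℝ S, x ≤ 1 := by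
      intro x hx
      have h0 := WGeoAux.spectrum_pos hS x hx
      have hmem : x ^ (-1 : ℝ) ∈ spectrum ℝ (S⁻¹) := by
        rw [WGeoAux.inv_eq_mpow hS, mpow,
          cfc_map_spectrum _ _ hsaS (WGeoAux.contOn_rpow (WGeoAux.spectrum_pos hS) _)]
        exact ⟨x, hx, rfl⟩
      have h1 := hinvspec _ hmem
      rw [Real.rpow_neg_one] at h1
      nlinarith [mul_inv_cancel₀ h0.ne']
    set f := fun x : ℝ => (1 - s) + s * x with hfdef
    have hfpos : ∀ x ∈ spectrum ℝ S, 0 < f x := by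
      intro x hx
      have h0 := WGeoAux.spectrum_pos hS x hx
      have h1 := hle1 x hx
      simp only [hfdef]
      nlinarith [mul_nonneg (sub_nonneg.mpr hs) (sub_nonneg.mpr h1)]
    have hfne : ∀ x ∈ spectrum ℝ S, f x ≠ 0 := fun x hx => (hfpos x hx).ne'
    have hcontf : ContinuousOn f (spectrum ℝ S) :=
      continuousOn_const.add (continuousOn_const.mul continuousOn_id)
    set g := fun x : ℝ => x * (f x)⁻¹ with hgdef
    have hcontg : ContinuousOn g (spectrum ℝ S) :=
      continuousOn_id.mul (hcontf.inv₀ hfne)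
    have hMc : cfc f S = ((1 - s : ℝ) : ℂ) • 1 + ((s : ℝ) : ℂ) • S :=
      WGeoAux.affine_cfc hS (1 - s) s
    have hM : (cfc f S).PosDef := WGeoAux.cfc_posDef hS hcontf hfpos
    set M := cfc f S with hMdef
    have hw : wmean A B s = M * A * M := by rw [hMc]; rfl
    set N := cfc g S with hNdef
    have hN : N.PosDef := WGeoAux.cfc_posDef hS hcontg
      (fun x hx => mul_pos (WGeoAux.spectrum_pos hS x hx) (inv_pos.mpr (hfpos x hx)))
    have hNM : N * M = S := by
      rw [hNdef, hMdef, ← cfc_mul g f S hcontg hcontf]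
      have hcg : cfc (fun x => g x * f x) S = cfc (fun x : ℝ => x) S :=
        cfc_congr fun x hx => by
          have hfx := hfne x hx
          simp only [hfdef] at hfx
          simp only [hgdef, hfdef]
          rw [mul_assoc, inv_mul_cancel₀ hfx, mul_one]
      rw [hcg, cfc_id' ℝ S hsaS]
    have hMN : M * N = S := by
      rw [hNdef, hMdef, ← cfc_mul f g S hcontf hcontg]
      have hcg : cfc (fun x => f x * g x) S = cfc (fun x : ℝ => x) S :=
        cfc_congr fun x hx => by
          have hfx := hfne x hx
          simp only [hfdef] at hfx
          simp only [hgdef, hfdef]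
          rw [mul_comm, mul_assoc, inv_mul_cancel₀ hfx, mul_one]
      rw [hcg, cfc_id' ℝ S hsaS]
    have hX : (M * A * M).PosDef := by
      have h3 := WGeoAux.posDef_conj hA hM.isUnit
      rwa [hM.1] at h3
    have hNXN : N * (M * A * M) * N = B := by
      calc N * (M * A * M) * N = N * M * A * (M * N) := by noncomm_ring
        _ = B := by rw [hNM, hMN]; exact hSAS
    have hkey : gmean (M * A * M)⁻¹ B (1/2) = N := by
      rw [← hNXN]; exact WGeoAux.riccati hX hN
    set r := (1 - t) * s + t with hrdef
    have hcongr1 : ∀ x ∈ spectrum ℝ S, ((1 - t) + t * g x) * f x = (1 - r) + r * x := by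
      intro x hx
      have hfx := hfne x hx
      simp only [hfdef] at hfx
      simp only [hgdef, hfdef, hrdef]
      rw [add_mul, mul_assoc t, mul_assoc x, inv_mul_cancel₀ hfx, mul_one]
      ring
    have hcontgh : ContinuousOn (fun x : ℝ => (1 - t) + t * g x) (spectrum ℝ S) :=
      continuousOn_const.add (continuousOn_const.mul hcontg)
    have hH : cfc (fun x : ℝ => (1 - t) + t * g x) S
        = ((1 - t : ℝ) : ℂ) • 1 + ((t : ℝ) : ℂ) • N := by
      have h5 := WGeoAux.affine_cfc' hS hcontg (1 - t) t
      rwa [← hNdef] at h5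
    have hprod1 : cfc (fun x : ℝ => (1 - t) + t * g x) S * M
        = cfc (fun x : ℝ => (1 - r) + r * x) S := by
      rw [hMdef, ← cfc_mul _ f S hcontgh hcontf]
      exact cfc_congr fun x hx => hcongr1 x hx
    have hprod2 : M * cfc (fun x : ℝ => (1 - t) + t * g x) S
        = cfc (fun x : ℝ => (1 - r) + r * x) S := by
      rw [hMdef, ← cfc_mul f _ S hcontf hcontgh]
      exact cfc_congr fun x hx => by rw [mul_comm]; exact hcongr1 x hx
    have hrc : cfc (fun x : ℝ => (1 - r) + r * x) S
        = ((1 - r : ℝ) : ℂ) • 1 + ((r : ℝ) : ℂ) • S := WGeoAux.affine_cfc hS (1 - r) r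
    calc wmean (wmean A B s) B t
        = (((1 - t : ℝ) : ℂ) • 1 + ((t : ℝ) : ℂ) • gmean (wmean A B s)⁻¹ B (1/2)) *
            (wmean A B s) *
          (((1 - t : ℝ) : ℂ) • 1 + ((t : ℝ) : ℂ) • gmean (wmean A B s)⁻¹ B (1/2)) := rfl
      _ = (((1 - t : ℝ) : ℂ) • 1 + ((t : ℝ) : ℂ) • N) * (M * A * M) *
          (((1 - t : ℝ) : ℂ) • 1 + ((t : ℝ) : ℂ) • N) := by rw [hw, hkey]
      _ = cfc (fun x : ℝ => (1 - t) + t * g x) S * (M * A * M) *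
          cfc (fun x : ℝ => (1 - t) + t * g x) S := by rw [hH]
      _ = cfc (fun x : ℝ => (1 - t) + t * g x) S * M * A *
          (M * cfc (fun x : ℝ => (1 - t) + t * g x) S) := by noncomm_ring
      _ = (((1 - r : ℝ) : ℂ) • 1 + ((r : ℝ) : ℂ) • S) * A *
          (((1 - r : ℝ) : ℂ) • 1 + ((r : ℝ) : ℂ) • S) := by rw [hprod1, hprod2, hrc]
      _ = wmean A B r := rfl
end
end

section
/- Let A, B be n×n complex positive definite matrices. (1) If A ⪯ B in the near order, then for every t ∈ (1, ∞): A ◇_t B ⪯ A ♮_t B. (2) If B ⪯ A in the near order, then for every t ∈ (−∞, 0): A ◇_t B ⪯ A ♮_t B. In either case, equality A ◇_t B = A ♮_t B holds if and only if A = B. -/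
open scoped ComplexOrder Matrix

noncomputable section

namespace MyAux

open Matrix Set

variable {n : ℕ}
lemma spec_pos {A : Matrix (Fin n) (Fin n) ℂ} (hA : A.PosDef) :
    ∀ x ∈ spectrum ℝ A, 0 < x := by
  intro x hx
  rw [Matrix.IsHermitian.spectrum_real_eq_range_eigenvalues hA.1] at hx
  obtain ⟨i, rfl⟩ := hx
  exact hA.eigenvalues_pos i
lemma contOn_rpow (t : ℝ) {s : Set ℝ} (hs : ∀ x ∈ s, 0 < x) :
    ContinuousOn (fun x : ℝ => x ^ t) s := fun x hx =>
  (Real.continuousAt_rpow_const x t (Or.inl (hs x hx).ne')).continuousWithinAt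
lemma posDef_conj {X M : Matrix (Fin n) (Fin n) ℂ} (hX : X.PosDef) (hM : IsUnit M) :
    (Mᴴ * X * M).PosDef := by
  exact hX.conjTranspose_mul_mul_same (Matrix.mulVec_injective_of_isUnit hM)

lemma cfc_psd {A : Matrix (Fin n) (Fin n) ℂ} (hA : A.IsHermitian) (f : ℝ → ℝ)
    (hf : ContinuousOn f (spectrum ℝ A)) (h0 : ∀ x ∈ spectrum ℝ A, 0 ≤ f x) :
    (cfc f A).PosSemidef := by
  have hs : ContinuousOn (fun x => Real.sqrt (f x)) (spectrum ℝ A) :=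
    Real.continuous_sqrt.comp_continuousOn hf
  have h1 : cfc f A = cfc (fun x => Real.sqrt (f x) * Real.sqrt (f x)) A :=
    cfc_congr fun x hx => (Real.mul_self_sqrt (h0 x hx)).symm
  rw [h1, cfc_mul _ _ A hs hs]
  have hh : (cfc (fun x => Real.sqrt (f x)) A).IsHermitian := cfc_predicate _ A
  nth_rewrite 1 [← hh]
  exact Matrix.posSemidef_conjTranspose_mul_self _

lemma cfc_pd {A : Matrix (Fin n) (Fin n) ℂ} (hA : A.PosDef) (f : ℝ → ℝ)
    (hf : ContinuousOn f (spectrum ℝ A)) (h0 : ∀ x ∈ spectrum ℝ A, 0 < f x) :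
    (cfc f A).PosDef := by
  have hs : ContinuousOn (fun x => Real.sqrt (f x)) (spectrum ℝ A) :=
    Real.continuous_sqrt.comp_continuousOn hf
  have hsi : ContinuousOn (fun x => (Real.sqrt (f x))⁻¹) (spectrum ℝ A) :=
    hs.inv₀ fun x hx => (Real.sqrt_pos.mpr (h0 x hx)).ne'
  have hh : (cfc (fun x => Real.sqrt (f x)) A).IsHermitian := cfc_predicate _ A
  have h1 : cfc (fun x => Real.sqrt (f x)) A * cfc (fun x => (Real.sqrt (f x))⁻¹) A = 1 := by
    rw [← cfc_mul _ _ A hs hsi]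
    exact (cfc_congr (g := fun _ => (1:ℝ)) fun x hx =>
      mul_inv_cancel₀ (Real.sqrt_pos.mpr (h0 x hx)).ne').trans (cfc_const_one ℝ A hA.1)
  have hu : IsUnit (cfc (fun x => Real.sqrt (f x)) A) :=
    (Matrix.isUnit_iff_isUnit_det _).mpr (Matrix.isUnit_det_of_right_inverse h1)
  have e : cfc f A = (cfc (fun x => Real.sqrt (f x)) A)ᴴ * 1 *
      (cfc (fun x => Real.sqrt (f x)) A) := by
    rw [Matrix.mul_one, hh, ← cfc_mul _ _ A hs hs]
    exact cfc_congr fun x hx => (Real.mul_self_sqrt (h0 x hx).le).symm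
  rw [e]
  exact posDef_conj Matrix.PosDef.one hu

lemma mpow_herm (A : Matrix (Fin n) (Fin n) ℂ) (t : ℝ) : (mpow A t).IsHermitian :=
  cfc_predicate _ A

lemma mpow_pd {A : Matrix (Fin n) (Fin n) ℂ} (hA : A.PosDef) (t : ℝ) : (mpow A t).PosDef :=
  cfc_pd hA _ (contOn_rpow t (spec_pos hA))
    (fun x hx => Real.rpow_pos_of_pos (spec_pos hA x hx) t)

lemma mpow_mul_mpow {A : Matrix (Fin n) (Fin n) ℂ} (hA : A.PosDef) (s t : ℝ) :
    mpow A s * mpow A t = mpow A (s + t) := by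
  unfold mpow
  rw [← cfc_mul _ _ A (contOn_rpow s (spec_pos hA)) (contOn_rpow t (spec_pos hA))]
  exact cfc_congr fun x hx => (Real.rpow_add (spec_pos hA x hx) s t).symm

lemma mpow_one' {A : Matrix (Fin n) (Fin n) ℂ} (hA : A.PosDef) : mpow A 1 = A := by
  unfold mpow
  exact (cfc_congr (g := fun x : ℝ => x) fun x _ => Real.rpow_one x).trans (cfc_id' ℝ A hA.1)

lemma mpow_zero' {A : Matrix (Fin n) (Fin n) ℂ} (hA : A.PosDef) : mpow A 0 = 1 := by
  unfold mpow
  exact (cfc_congr (g := fun _ : ℝ => (1:ℝ)) fun x _ => Real.rpow_zero x).trans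
    (cfc_const_one ℝ A hA.1)

lemma mpow_mpow {A : Matrix (Fin n) (Fin n) ℂ} (hA : A.PosDef) (s t : ℝ) :
    mpow (mpow A s) t = mpow A (s * t) := by
  unfold mpow
  have hf : ContinuousOn (fun x : ℝ => x ^ s) (spectrum ℝ A) := contOn_rpow s (spec_pos hA)
  have hg : ContinuousOn (fun x : ℝ => x ^ t) ((fun x : ℝ => x ^ s) '' spectrum ℝ A) := by
    apply contOn_rpow t
    rintro y ⟨x, hx, rfl⟩
    exact Real.rpow_pos_of_pos (spec_pos hA x hx) s
  exact (cfc_comp' (fun x : ℝ => x ^ t) (fun x : ℝ => x ^ s) A hg hf hA.1).symm.trans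
    (cfc_congr fun x hx => (Real.rpow_mul (spec_pos hA x hx).le s t).symm)

lemma inv_eq_mpow {A : Matrix (Fin n) (Fin n) ℂ} (hA : A.PosDef) : A⁻¹ = mpow A (-1) := by
  apply Matrix.inv_eq_right_inv
  nth_rewrite 1 [← mpow_one' hA]
  rw [mpow_mul_mpow hA]
  norm_num
  exact mpow_zero' hA

lemma mpow_inv {A : Matrix (Fin n) (Fin n) ℂ} (hA : A.PosDef) (t : ℝ) :
    mpow A⁻¹ t = mpow A (-t) := by
  rw [inv_eq_mpow hA, mpow_mpow hA, neg_one_mul]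

lemma mpow_half_mul_self {P : Matrix (Fin n) (Fin n) ℂ} (hP : P.PosDef) :
    mpow (P * P) (1/2) = P := by
  have h2 : P * P = mpow P 2 := by
    have h := mpow_mul_mpow hP 1 1
    rw [mpow_one' hP] at h
    norm_num at h
    exact h
  rw [h2, mpow_mpow hP]
  norm_num
  exact mpow_one' hP



open Matrix Set

variable {n : ℕ}

lemma riccati {X Y G : Matrix (Fin n) (Fin n) ℂ} (hX : X.PosDef) (hG : G.PosDef)
    (h : G * X * G = Y) : gmean X⁻¹ Y (1/2) = G := by
  unfold gmean
  rw [mpow_inv hX (1/2), mpow_inv hX (-(1/2)), neg_neg]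
  set S := mpow X (1/2) with hSdef
  set T := mpow X (-(1/2)) with hTdef
  have hS : S.PosDef := mpow_pd hX _
  have hT : T.PosDef := mpow_pd hX _
  have hTS : T * S = 1 := by
    rw [hSdef, hTdef, mpow_mul_mpow hX]
    norm_num
    exact mpow_zero' hX
  have hST : S * T = 1 := by
    rw [hSdef, hTdef, mpow_mul_mpow hX]
    norm_num
    exact mpow_zero' hX
  have hXSS : S * S = X := by
    rw [hSdef, mpow_mul_mpow hX]
    norm_num
    exact mpow_one' hX
  have hSGS : (S * G * S).PosDef := by
    have := posDef_conj hG hS.isUnit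
    rwa [hS.1] at this
  have hmid : S * Y * S = (S * G * S) * (S * G * S) := by
    rw [← h, ← hXSS]
    simp only [Matrix.mul_assoc]
  rw [hmid, mpow_half_mul_self hSGS]
  have e : T * (S * G * S) * T = (T * S) * G * (S * T) := by
    simp only [Matrix.mul_assoc]
  rw [e, hTS, hST, Matrix.one_mul, Matrix.mul_one]

lemma gmean_spec {A B : Matrix (Fin n) (Fin n) ℂ} (hA : A.PosDef) (hB : B.PosDef) :
    (gmean A⁻¹ B (1/2)).PosDef ∧ gmean A⁻¹ B (1/2) * A * gmean A⁻¹ B (1/2) = B := by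
  set S := mpow A (1/2) with hSdef
  set T := mpow A (-(1/2)) with hTdef
  have hS : S.PosDef := mpow_pd hA _
  have hT : T.PosDef := mpow_pd hA _
  have hTS : T * S = 1 := by
    rw [hSdef, hTdef, mpow_mul_mpow hA]; norm_num; exact mpow_zero' hA
  have hST : S * T = 1 := by
    rw [hSdef, hTdef, mpow_mul_mpow hA]; norm_num; exact mpow_zero' hA
  have hM : (S * B * S).PosDef := by
    have := posDef_conj hB hS.isUnit
    rwa [hS.1] at this
  set Q := mpow (S * B * S) (1/2) with hQdef
  have hQ : Q.PosDef := mpow_pd hM _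
  have hG : (T * Q * T).PosDef := by
    have := posDef_conj hQ hT.isUnit
    rwa [hT.1] at this
  have hTAT : T * A * T = 1 := by
    nth_rewrite 1 [← mpow_one' hA]
    rw [hTdef, mpow_mul_mpow hA, mpow_mul_mpow hA]
    norm_num
    exact mpow_zero' hA
  have hQQ : Q * Q = S * B * S := by
    rw [hQdef, mpow_mul_mpow hM]
    norm_num
    exact mpow_one' hM
  have hGAG : (T * Q * T) * A * (T * Q * T) = B := by
    have e1 : (T * Q * T) * A * (T * Q * T) = T * (Q * (T * A * T) * Q) * T := by
      simp only [Matrix.mul_assoc]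
    rw [e1, hTAT, Matrix.mul_one, hQQ]
    have e2 : T * (S * B * S) * T = (T * S) * B * (S * T) := by
      simp only [Matrix.mul_assoc]
    rw [e2, hTS, hST, Matrix.one_mul, Matrix.mul_one]
  have hkey := riccati hA hG hGAG
  rw [hkey]
  exact ⟨hG, hGAG⟩

lemma spec_nonneg {A : Matrix (Fin n) (Fin n) ℂ} (hA : A.PosSemidef) :
    ∀ x ∈ spectrum ℝ A, 0 ≤ x := by
  intro x hx
  rw [Matrix.IsHermitian.spectrum_real_eq_range_eigenvalues hA.1] at hx
  obtain ⟨i, rfl⟩ := hx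
  exact hA.eigenvalues_nonneg i

lemma one_le_spec {C : Matrix (Fin n) (Fin n) ℂ} (hC : C.IsHermitian)
    (h : (C - 1).PosSemidef) : ∀ x ∈ spectrum ℝ C, 1 ≤ x := by
  intro x hx
  have hcont : ContinuousOn (fun y : ℝ => y - 1) (spectrum ℝ C) :=
    (continuous_id.sub continuous_const).continuousOn
  have e : cfc (fun y : ℝ => y - 1) C = C - 1 := by
    rw [cfc_sub (fun y : ℝ => y) (fun _ : ℝ => (1:ℝ)) C continuousOn_id continuousOn_const]
    congr 1
    · exact cfc_id' ℝ C hC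
    · exact cfc_const_one ℝ C hC
  have hsp := cfc_map_spectrum (fun y : ℝ => y - 1) C hC hcont
  have hmem : x - 1 ∈ spectrum ℝ (C - 1) := by
    rw [← e, hsp]
    exact ⟨x, hx, rfl⟩
  linarith [spec_nonneg h _ hmem]

lemma spec_le_one {C : Matrix (Fin n) (Fin n) ℂ} (hC : C.PosDef)
    (h : (C⁻¹ - 1).PosSemidef) : ∀ x ∈ spectrum ℝ C, x ≤ 1 := by
  intro x hx
  have hx0 := spec_pos hC x hx
  have hsp := cfc_map_spectrum (fun y : ℝ => y ^ (-1:ℝ)) C hC.1 (contOn_rpow _ (spec_pos hC))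
  have hEq : C⁻¹ = cfc (fun y : ℝ => y ^ (-1:ℝ)) C := inv_eq_mpow hC
  have hmem : x ^ (-1 : ℝ) ∈ spectrum ℝ C⁻¹ := by
    rw [hEq, hsp]
    exact ⟨x, hx, rfl⟩
  have h1 : 1 ≤ x ^ (-1 : ℝ) := one_le_spec hC.inv.1 h _ hmem
  rw [Real.rpow_neg_one] at h1
  calc x = x * 1 := (mul_one x).symm
    _ ≤ x * x⁻¹ := mul_le_mul_of_nonneg_left h1 hx0.le
    _ = 1 := mul_inv_cancel₀ hx0.ne'

lemma bern_neg {t x : ℝ} (ht : t < 0) (hx0 : 0 < x) (hx1 : x < 1) :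
    1 - t + t * x < x ^ t := by
  have key : StrictAntiOn (fun y : ℝ => y ^ t - (1 - t + t * y)) (Set.Ioc 0 1) := by
    apply strictAntiOn_of_deriv_neg (convex_Ioc 0 1)
    · exact (contOn_rpow t fun y hy => hy.1).sub
        ((continuous_const.add (continuous_const.mul continuous_id)).continuousOn)
    · intro y hy
      rw [interior_Ioc] at hy
      have hd : HasDerivAt (fun y : ℝ => y ^ t - (1 - t + t * y)) (t * y ^ (t - 1) - t) y := by
        have h1 : HasDerivAt (fun y : ℝ => y ^ t) (t * y ^ (t - 1)) y :=
          Real.hasDerivAt_rpow_const (Or.inl hy.1.ne')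
        have h2 : HasDerivAt (fun y : ℝ => 1 - t + t * y) t y := by
          simpa using ((hasDerivAt_id y).const_mul t).const_add (1 - t)
        exact h1.sub h2
      rw [hd.deriv]
      have hgt : (1 : ℝ) < y ^ (t - 1) :=
        (Real.one_lt_rpow_iff_of_pos hy.1).mpr (Or.inr ⟨hy.2, by linarith⟩)
      nlinarith
  have hf := key (Set.mem_Ioc.mpr ⟨hx0, hx1.le⟩) (Set.mem_Ioc.mpr ⟨one_pos, le_rfl⟩) hx1
  have h1 : (1:ℝ) ^ t - (1 - t + t * 1) = 0 := by
    rw [Real.one_rpow]; ring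
  simp only [h1] at hf
  linarith

lemma bern_lt {t x : ℝ} (h : (1 < t ∧ 1 ≤ x) ∨ (t < 0 ∧ 0 < x ∧ x ≤ 1)) (hx : x ≠ 1) :
    1 - t + t * x < x ^ t := by
  rcases h with ⟨ht, hx1⟩ | ⟨ht, hx0, hx1⟩
  · have hx1' : 1 < x := lt_of_le_of_ne hx1 (Ne.symm hx)
    have := one_add_mul_self_lt_rpow_one_add (s := x - 1) (by linarith) (by
      intro h; exact hx (by linarith)) ht
    have e : 1 + (x - 1) = x := by ring
    rw [e] at this
    linarith
  · exact bern_neg ht hx0 (lt_of_le_of_ne hx1 hx)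

lemma bern_le {t x : ℝ} (h : (1 < t ∧ 1 ≤ x) ∨ (t < 0 ∧ 0 < x ∧ x ≤ 1)) :
    1 - t + t * x ≤ x ^ t := by
  by_cases hx : x = 1
  · subst hx
    rw [Real.one_rpow]
    linarith
  · exact (bern_lt h hx).le

lemma w_one_le {t x : ℝ} (h : (1 < t ∧ 1 ≤ x) ∨ (t < 0 ∧ 0 < x ∧ x ≤ 1)) :
    1 ≤ 1 - t + t * x := by
  rcases h with ⟨ht, hx⟩ | ⟨ht, hx0, hx1⟩ <;> nlinarith

lemma means_eq_self {A : Matrix (Fin n) (Fin n) ℂ} (hA : A.PosDef) (t : ℝ) :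
    wmean A A t = smean A A t := by
  have hC1 : gmean A⁻¹ A (1/2) = 1 :=
    riccati hA Matrix.PosDef.one (by rw [Matrix.one_mul, Matrix.mul_one])
  have hm1 : mpow (1 : Matrix (Fin n) (Fin n) ℂ) t = 1 := by
    have h := cfc_apply_one (R := ℝ) (A := Matrix (Fin n) (Fin n) ℂ) (f := fun x : ℝ => x ^ t)
    have h2 : ((1:ℝ) ^ t : ℝ) = 1 := Real.one_rpow t
    unfold mpow
    exact h.trans (by rw [h2, _root_.map_one])
  have hbr : ((1 - t : ℝ) : ℂ) • (1 : Matrix (Fin n) (Fin n) ℂ) + ((t : ℝ) : ℂ) • 1 = 1 := by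
    rw [← add_smul]
    norm_num
  unfold wmean smean
  rw [hC1, hm1, hbr, Matrix.one_mul, Matrix.mul_one]

lemma main_core {A B : Matrix (Fin n) (Fin n) ℂ} (hA : A.PosDef) (hB : B.PosDef) (t : ℝ)
    (hsp : ∀ x ∈ spectrum ℝ (gmean A⁻¹ B (1/2)),
        (1 < t ∧ 1 ≤ x) ∨ (t < 0 ∧ 0 < x ∧ x ≤ 1)) :
    NearLE (wmean A B t) (smean A B t) ∧ (wmean A B t = smean A B t ↔ A = B) := by
  obtain ⟨hC, hCAC⟩ := gmean_spec hA hB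
  set C := gmean A⁻¹ B (1/2) with hCdef
  have hspec := spec_pos hC
  set w : ℝ → ℝ := fun x => 1 - t + t * x with hwdef
  set g : ℝ → ℝ := fun x => x ^ t * (w x)⁻¹ with hgdef
  have hw1 : ∀ x ∈ spectrum ℝ C, 1 ≤ w x := fun x hx => w_one_le (hsp x hx)
  have hwpos : ∀ x ∈ spectrum ℝ C, 0 < w x := fun x hx => lt_of_lt_of_le one_pos (hw1 x hx)
  have hwcont : ContinuousOn w (spectrum ℝ C) := by
    rw [hwdef]
    exact (continuous_const.add (continuous_const.mul continuous_id)).continuousOn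
  have hwicont : ContinuousOn (fun x => (w x)⁻¹) (spectrum ℝ C) :=
    hwcont.inv₀ fun x hx => (hwpos x hx).ne'
  have hgcont : ContinuousOn g (spectrum ℝ C) := by
    rw [hgdef]
    exact (contOn_rpow t hspec).mul hwicont
  have hg1 : ∀ x ∈ spectrum ℝ C, 1 ≤ g x := by
    intro x hx
    simp only [hgdef]
    rw [← div_eq_mul_inv, one_le_div (hwpos x hx)]
    exact bern_le (hsp x hx)
  set E : Matrix (Fin n) (Fin n) ℂ := ((1 - t : ℝ) : ℂ) • 1 + ((t : ℝ) : ℂ) • C with hEdef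
  have coesmul : ∀ (r : ℝ) (X : Matrix (Fin n) (Fin n) ℂ), ((r : ℝ) : ℂ) • X = r • X :=
    fun r X => by rw [show ((r : ℝ) : ℂ) = algebraMap ℝ ℂ r from rfl, algebraMap_smul]
  have hE : E = cfc w C := by
    have h1 := cfc_const_add (1 - t) (fun x : ℝ => t * x) C
      ((continuous_const.mul continuous_id).continuousOn) hC.1
    have h2 : cfc (fun x : ℝ => t * x) C = t • C := cfc_const_mul_id t C hC.1
    rw [hEdef, hwdef, h1, h2, coesmul, coesmul, Algebra.algebraMap_eq_smul_one]
  have hEpd : E.PosDef := by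
    rw [hE]; exact cfc_pd hC w hwcont hwpos
  have hX : (E * A * E).PosDef := by
    have := posDef_conj hA hEpd.isUnit
    rwa [hEpd.1] at this
  set G := cfc g C with hGdef
  have hG : G.PosDef := cfc_pd hC g hgcont fun x hx => lt_of_lt_of_le one_pos (hg1 x hx)
  have hGE : G * E = mpow C t := by
    rw [hGdef, hE, ← cfc_mul g w C hgcont hwcont]
    exact cfc_congr fun x hx => by
      have hne : 1 - t + t * x ≠ 0 := by simpa [hwdef] using (hwpos x hx).ne'
      simp only [hgdef, hwdef]
      field_simp
  have hEG : E * G = mpow C t := by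
    rw [hGdef, hE, ← cfc_mul w g C hwcont hgcont]
    exact cfc_congr fun x hx => by
      have hne : 1 - t + t * x ≠ 0 := by simpa [hwdef] using (hwpos x hx).ne'
      simp only [hgdef, hwdef]
      field_simp
  have hwm : wmean A B t = E * A * E := by
    rw [hEdef, hCdef]
    rfl
  have hsm : smean A B t = mpow C t * A * mpow C t := by
    rw [hCdef]
    rfl
  have hGXG : G * (E * A * E) * G = smean A B t := by
    have e : G * (E * A * E) * G = (G * E) * A * (E * G) := by
      simp only [Matrix.mul_assoc]
    rw [hsm, e, hGE, hEG]
  have hric := riccati hX hG hGXG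
  constructor
  · show LoewnerLE 1 (gmean (wmean A B t)⁻¹ (smean A B t) (1/2))
    show (gmean (wmean A B t)⁻¹ (smean A B t) (1/2) - 1).PosSemidef
    rw [hwm, hric]
    have e : G - 1 = cfc (fun x => g x - 1) C := by
      rw [cfc_sub g (fun _ : ℝ => (1:ℝ)) C hgcont continuousOn_const, ← hGdef]
      congr 1
      exact (cfc_const_one ℝ C hC.1).symm
    rw [e]
    exact cfc_psd hC.1 _ (hgcont.sub continuousOn_const) fun x hx => by
      linarith [hg1 x hx]
  · constructor
    · intro heq
      have h2 : 1 * (E * A * E) * 1 = smean A B t := by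
        rw [Matrix.one_mul, Matrix.mul_one, ← hwm, heq]
      have hr2 := riccati hX Matrix.PosDef.one h2
      have hG1 : G = 1 := by rw [← hric, hr2]
      have hcfc : cfc g C = cfc (fun _ : ℝ => (1:ℝ)) C := by
        rw [← hGdef, hG1]
        exact (cfc_const_one ℝ C hC.1).symm
      have heqOn := eqOn_of_cfc_eq_cfc hcfc hgcont continuousOn_const hC.1
      have hspec1 : ∀ x ∈ spectrum ℝ C, x = (1:ℝ) := by
        intro x hx
        by_contra hne
        have h3 := bern_lt (hsp x hx) hne
        have h4 := heqOn hx
        simp only [hgdef, hwdef] at h4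
        rw [← div_eq_mul_inv, div_eq_one_iff_eq (by simpa [hwdef] using (hwpos x hx).ne')] at h4
        linarith
      have hCone : C = 1 := by
        have hid := cfc_id' ℝ C hC.1
        rw [← hid]
        exact (cfc_congr fun x hx => (hspec1 x hx)).trans (cfc_const_one ℝ C hC.1)
      calc A = 1 * A * 1 := by rw [Matrix.one_mul, Matrix.mul_one]
        _ = C * A * C := by rw [hCone]
        _ = B := hCAC
    · intro heq
      subst heq
      exact means_eq_self hA t

end MyAux

/-- (1) if `A ⪯ B` then `A ◇ₜ B ⪯ A ♮ₜ B` for `t ∈ (1,∞)`;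
(2) if `B ⪯ A` then `A ◇ₜ B ⪯ A ♮ₜ B` for `t ∈ (−∞,0)`;
in either case equality holds iff `A = B`. -/

theorem wmean_near_le_smean_outside {n : ℕ} (A B : Matrix (Fin n) (Fin n) ℂ)
    (hA : A.PosDef) (hB : B.PosDef) :
    (NearLE A B → ∀ t : ℝ, 1 < t → NearLE (wmean A B t) (smean A B t)) ∧
    (NearLE B A → ∀ t : ℝ, t < 0 → NearLE (wmean A B t) (smean A B t)) ∧
    (NearLE A B → ∀ t : ℝ, 1 < t → (wmean A B t = smean A B t ↔ A = B)) ∧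
    (NearLE B A → ∀ t : ℝ, t < 0 → (wmean A B t = smean A B t ↔ A = B)) := by
  obtain ⟨hC, hCAC⟩ := MyAux.gmean_spec hA hB
  have case1 : NearLE A B → ∀ x ∈ spectrum ℝ (gmean A⁻¹ B (1/2)), 1 ≤ x := fun h =>
    MyAux.one_le_spec hC.1 h
  have hdet : IsUnit (gmean A⁻¹ B (1/2)).det := Matrix.isUnit_iff_isUnit_det _ |>.mp hC.isUnit
  have key : ∀ C' : Matrix (Fin n) (Fin n) ℂ, IsUnit C'.det → C' * A * C' = B →
      C'⁻¹ * B * C'⁻¹ = A := by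
    intro C' hd h
    rw [← h]
    have e : C'⁻¹ * (C' * A * C') * C'⁻¹ = (C'⁻¹ * C') * A * (C' * C'⁻¹) := by
      simp only [Matrix.mul_assoc]
    rw [e, Matrix.nonsing_inv_mul _ hd, Matrix.mul_nonsing_inv _ hd,
      Matrix.one_mul, Matrix.mul_one]
  have hCiBCi : (gmean A⁻¹ B (1/2))⁻¹ * B * (gmean A⁻¹ B (1/2))⁻¹ = A :=
    key _ hdet hCAC
  have hinv : gmean B⁻¹ A (1/2) = (gmean A⁻¹ B (1/2))⁻¹ :=
    MyAux.riccati hB hC.inv hCiBCi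
  have case2 : NearLE B A → ∀ x ∈ spectrum ℝ (gmean A⁻¹ B (1/2)), x ≤ 1 := by
    intro h
    have h' : ((gmean A⁻¹ B (1/2))⁻¹ - 1).PosSemidef := by
      have h2 : (gmean B⁻¹ A (1/2) - 1).PosSemidef := h
      rwa [hinv] at h2
    exact MyAux.spec_le_one hC h'
  refine ⟨fun h t ht => (MyAux.main_core hA hB t
      (fun x hx => Or.inl ⟨ht, case1 h x hx⟩)).1,
    fun h t ht => (MyAux.main_core hA hB t
      (fun x hx => Or.inr ⟨ht, MyAux.spec_pos hC x hx, case2 h x hx⟩)).1,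
    fun h t ht => (MyAux.main_core hA hB t
      (fun x hx => Or.inl ⟨ht, case1 h x hx⟩)).2,
    fun h t ht => (MyAux.main_core hA hB t
      (fun x hx => Or.inr ⟨ht, MyAux.spec_pos hC x hx, case2 h x hx⟩)).2⟩
end
end

section
/- Let A, B be n×n complex positive definite matrices and t ∈ (0, 1). If any one of the following Loewner-order inequalities holds: (1) A^{-1} ◇_t A ≤ A^{-1} ◇_t B; (2) B^{-1} ◇_t B ≤ A^{-1} ◇_t B; (3) B^{-1} ◇_t A ≤ A^{-1} ◇_t A; (4) B^{-1} ◇_t A ≤ B^{-1} ◇_t B; then A ≤ B in the Loewner order. -/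
open scoped ComplexOrder Matrix

noncomputable section

namespace WassersteinProof

variable {n : ℕ} {A B : Matrix (Fin n) (Fin n) ℂ}

lemma star_U_mul_U (hA : A.IsHermitian) (X : Matrix (Fin n) (Fin n) ℂ) :
    star (hA.eigenvectorUnitary : Matrix (Fin n) (Fin n) ℂ) *
      ((hA.eigenvectorUnitary : Matrix (Fin n) (Fin n) ℂ) * X) = X := by
  rw [← mul_assoc, Unitary.coe_star_mul_self, one_mul]

lemma hcfc_mul (hA : A.IsHermitian) (f g : ℝ → ℝ) :
    hA.cfc f * hA.cfc g = hA.cfc (fun x => f x * g x) := by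
  unfold Matrix.IsHermitian.cfc
  simp only [Unitary.conjStarAlgAut_apply]
  simp only [mul_assoc, star_U_mul_U]
  rw [← mul_assoc (Matrix.diagonal _), Matrix.diagonal_mul_diagonal,
    show (fun i => (RCLike.ofReal ∘ f ∘ hA.eigenvalues) i * (RCLike.ofReal ∘ g ∘ hA.eigenvalues) i)
        = (RCLike.ofReal ∘ (fun x => f x * g x) ∘ hA.eigenvalues : Fin n → ℂ) from
      funext fun i => by push_cast [Function.comp]; ring]

lemma hcfc_congr (hA : A.IsHermitian) {f g : ℝ → ℝ}
    (h : ∀ i, f (hA.eigenvalues i) = g (hA.eigenvalues i)) : hA.cfc f = hA.cfc g := by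
  have e : (RCLike.ofReal ∘ f ∘ hA.eigenvalues : Fin n → ℂ)
      = RCLike.ofReal ∘ g ∘ hA.eigenvalues := by
    funext i; simp [h i]
  unfold Matrix.IsHermitian.cfc
  rw [e]

lemma hcfc_id (hA : A.IsHermitian) : hA.cfc id = A := hA.spectral_theorem.symm

lemma hcfc_one (hA : A.IsHermitian) : hA.cfc (fun _ => 1) = 1 := by
  unfold Matrix.IsHermitian.cfc
  simp only [Unitary.conjStarAlgAut_apply]
  simp only [Function.comp_def, RCLike.ofReal_one]
  rw [Matrix.diagonal_one, mul_one, (Matrix.mem_unitaryGroup_iff).mp hA.eigenvectorUnitary.2]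

lemma hcfc_sub (hA : A.IsHermitian) (f g : ℝ → ℝ) :
    hA.cfc f - hA.cfc g = hA.cfc (fun x => f x - g x) := by
  unfold Matrix.IsHermitian.cfc
  simp only [Unitary.conjStarAlgAut_apply]
  rw [← Matrix.sub_mul, ← Matrix.mul_sub, Matrix.diagonal_sub,
    show (fun i => (RCLike.ofReal ∘ f ∘ hA.eigenvalues) i - (RCLike.ofReal ∘ g ∘ hA.eigenvalues) i)
        = (RCLike.ofReal ∘ (fun x => f x - g x) ∘ hA.eigenvalues : Fin n → ℂ) from
      funext fun i => by push_cast [Function.comp]; ring]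

lemma hcfc_herm (hA : A.IsHermitian) (f : ℝ → ℝ) : (hA.cfc f).IsHermitian := by
  unfold Matrix.IsHermitian.cfc
  simp only [Unitary.conjStarAlgAut_apply]
  unfold Matrix.IsHermitian
  rw [Matrix.conjTranspose_mul, Matrix.conjTranspose_mul, Matrix.diagonal_conjTranspose,
    ← Matrix.star_eq_conjTranspose, ← Matrix.star_eq_conjTranspose, star_star, mul_assoc,
    show star (RCLike.ofReal ∘ f ∘ hA.eigenvalues : Fin n → ℂ)
        = RCLike.ofReal ∘ f ∘ hA.eigenvalues from
      funext fun i => by simp [Pi.star_def, Function.comp]]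

lemma posdef_conj {B C D : Matrix (Fin n) (Fin n) ℂ} (hB : B.PosDef) (h : D * Cᴴ = 1) :
    (C * B * Cᴴ).PosDef := by
  refine Matrix.PosDef.of_dotProduct_mulVec_pos (Matrix.isHermitian_mul_mul_conjTranspose _ hB.1) fun x hx => ?_
  have key : star x ⬝ᵥ (C * B * Cᴴ) *ᵥ x = star (Cᴴ *ᵥ x) ⬝ᵥ B *ᵥ (Cᴴ *ᵥ x) := by
    rw [← Matrix.mulVec_mulVec, ← Matrix.mulVec_mulVec, Matrix.dotProduct_mulVec (star x),
      Matrix.star_mulVec, Matrix.conjTranspose_conjTranspose]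
  rw [key]
  refine hB.dotProduct_mulVec_pos fun h0 => hx ?_
  have := congrArg (D *ᵥ ·) h0
  simpa [Matrix.mulVec_mulVec, h] using this

lemma hcfc_psd (hA : A.IsHermitian) {f : ℝ → ℝ}
    (h : ∀ i, 0 ≤ f (hA.eigenvalues i)) : (hA.cfc f).PosSemidef := by
  unfold Matrix.IsHermitian.cfc
  simp only [Unitary.conjStarAlgAut_apply]
  rw [Matrix.star_eq_conjTranspose]
  refine (Matrix.posSemidef_diagonal_iff.mpr fun i => ?_).mul_mul_conjTranspose_same _
  simpa [Function.comp] using (Complex.zero_le_real (x := f (hA.eigenvalues i))).mpr (h i)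

lemma hcfc_posdef (hA : A.IsHermitian) {f : ℝ → ℝ}
    (h : ∀ i, 0 < f (hA.eigenvalues i)) : (hA.cfc f).PosDef := by
  unfold Matrix.IsHermitian.cfc
  simp only [Unitary.conjStarAlgAut_apply]
  rw [Matrix.star_eq_conjTranspose]
  refine posdef_conj (Matrix.PosDef.diagonal fun i => ?_)
    (D := (hA.eigenvectorUnitary : Matrix (Fin n) (Fin n) ℂ)) ?_
  · simpa [Function.comp] using (Complex.zero_lt_real (x := f (hA.eigenvalues i))).mpr (h i)
  · rw [← Matrix.star_eq_conjTranspose]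
    exact (Matrix.mem_unitaryGroup_iff).mp hA.eigenvectorUnitary.2

lemma mpow_eq (hA : A.IsHermitian) (t : ℝ) :
    mpow A t = hA.cfc (fun x => x ^ t) := hA.cfc_eq _

lemma eig_one (i : Fin n) :
    (Matrix.isHermitian_one (n := Fin n) (α := ℂ)).eigenvalues i = 1 := by
  set h1 := Matrix.isHermitian_one (n := Fin n) (α := ℂ)
  have hv := h1.mulVec_eigenvectorBasis i
  rw [Matrix.one_mulVec] at hv
  have hne : (⇑(h1.eigenvectorBasis i) : Fin n → ℂ) ≠ 0 := by
    intro h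
    exact h1.eigenvectorBasis.orthonormal.ne_zero i (by ext j; exact congrFun h j)
  obtain ⟨j, hj⟩ := Function.ne_iff.mp hne
  simp only [Pi.zero_apply] at hj
  have hj2 := congrFun hv j
  simp only [Pi.smul_apply] at hj2
  rw [Complex.real_smul] at hj2
  have h4 := sub_eq_zero.mpr hj2.symm
  rw [← sub_one_mul] at h4
  rcases mul_eq_zero.mp h4 with h5 | h5
  · exact_mod_cast sub_eq_zero.mp h5
  · exact absurd h5 hj

lemma mpow_one_mat (t : ℝ) : mpow (1 : Matrix (Fin n) (Fin n) ℂ) t = 1 := by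
  rw [mpow_eq Matrix.isHermitian_one,
    hcfc_congr Matrix.isHermitian_one (g := fun _ => 1)
      (fun i => by rw [eig_one i, Real.one_rpow]),
    hcfc_one]

set_option maxHeartbeats 1000000 in
lemma pack (hA : A.PosDef) (hB : B.PosDef) :
    mpow A (1/2) * mpow A (-(1/2)) = 1 ∧
    mpow A (-(1/2)) * mpow A (1/2) = 1 ∧
    mpow A (1/2) * mpow A (1/2) = A ∧
    (mpow A (1/2)).IsHermitian ∧
    (mpow A (-(1/2))).IsHermitian ∧
    (mpow (mpow A (-(1/2)) * B * mpow A (-(1/2))) (1/2)).IsHermitian ∧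
    (mpow (mpow A (-(1/2)) * B * mpow A (-(1/2))) (1/2)).PosDef ∧
    mpow (mpow A (-(1/2)) * B * mpow A (-(1/2))) (1/2) *
      mpow (mpow A (-(1/2)) * B * mpow A (-(1/2))) (1/2)
      = mpow A (-(1/2)) * B * mpow A (-(1/2)) ∧
    mpow A (1/2) * (mpow (mpow A (-(1/2)) * B * mpow A (-(1/2))) (1/2) *
      mpow (mpow A (-(1/2)) * B * mpow A (-(1/2))) (1/2)) * mpow A (1/2) = B ∧
    A⁻¹ = mpow A (-(1/2)) * mpow A (-(1/2)) ∧
    B⁻¹ = mpow A (-(1/2)) * mpow (mpow A (-(1/2)) * B * mpow A (-(1/2))) (-1) * mpow A (-(1/2)) ∧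
    mpow (mpow A (-(1/2)) * B * mpow A (-(1/2))) (-1) *
      (mpow (mpow A (-(1/2)) * B * mpow A (-(1/2))) (1/2) *
       mpow (mpow A (-(1/2)) * B * mpow A (-(1/2))) (1/2)) = 1 ∧
    mpow (mpow A (-(1/2)) * B * mpow A (-(1/2))) (1/2) *
      (mpow (mpow A (-(1/2)) * B * mpow A (-(1/2))) (1/2) *
       mpow (mpow A (-(1/2)) * B * mpow A (-(1/2))) (-1)) = 1 ∧
    (mpow A (-(1/2)) * mpow A (-(1/2))).PosDef := by
  have hAh := hA.1
  set Q := mpow A (1/2) with hQdef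
  set P := mpow A (-(1/2)) with hPdef
  have epos : ∀ i, 0 < hAh.eigenvalues i := fun i => hA.eigenvalues_pos i
  have hQP : Q * P = 1 := by
    rw [hQdef, hPdef, mpow_eq hAh, mpow_eq hAh, hcfc_mul,
      hcfc_congr hAh (g := fun _ => 1) (fun i => by
        rw [← Real.rpow_add (epos i)]; norm_num), hcfc_one]
  have hPQ : P * Q = 1 := by
    rw [hQdef, hPdef, mpow_eq hAh, mpow_eq hAh, hcfc_mul,
      hcfc_congr hAh (g := fun _ => 1) (fun i => by
        rw [← Real.rpow_add (epos i)]; norm_num), hcfc_one]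
  have hQQ : Q * Q = A := by
    rw [hQdef, mpow_eq hAh, hcfc_mul,
      hcfc_congr hAh (g := id) (fun i => by
        rw [← Real.rpow_add (epos i)]; norm_num [Real.rpow_one]), hcfc_id]
  have hQh : Q.IsHermitian := by rw [hQdef, mpow_eq hAh]; exact hcfc_herm hAh _
  have hPh : P.IsHermitian := by rw [hPdef, mpow_eq hAh]; exact hcfc_herm hAh _
  have h1 : ∀ X, Q * (P * X) = X := fun X => by rw [← mul_assoc, hQP, one_mul]
  have h2 : ∀ X, P * (Q * X) = X := fun X => by rw [← mul_assoc, hPQ, one_mul]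
  have hMpos : (P * B * P).PosDef := by
    have h := posdef_conj hB (C := P) (D := Q) (by rw [hPh.eq]; exact hQP)
    rwa [hPh.eq] at h
  have hMh := hMpos.1
  have mepos : ∀ i, 0 < hMh.eigenvalues i := fun i => hMpos.eigenvalues_pos i
  set S := mpow (P * B * P) (1/2) with hSdef
  set W := mpow (P * B * P) (-1) with hWdef
  have hSh : S.IsHermitian := by rw [hSdef, mpow_eq hMh]; exact hcfc_herm hMh _
  have hSpos : S.PosDef := by
    rw [hSdef, mpow_eq hMh]
    exact hcfc_posdef hMh fun i => Real.rpow_pos_of_pos (mepos i) _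
  have hSS : S * S = P * B * P := by
    rw [hSdef, mpow_eq hMh, hcfc_mul,
      hcfc_congr hMh (g := id) (fun i => by
        rw [← Real.rpow_add (mepos i)]; norm_num [Real.rpow_one]), hcfc_id]
  have hWSS : W * (S * S) = 1 := by
    rw [hSS, hWdef, mpow_eq hMh]
    have e : hMh.cfc (fun x => x ^ (-1 : ℝ)) * hMh.cfc id = 1 := by
      rw [hcfc_mul, hcfc_congr hMh (g := fun _ => 1) (fun i => by
        rw [Real.rpow_neg_one]
        exact inv_mul_cancel₀ (mepos i).ne'), hcfc_one]
    rwa [hcfc_id] at e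
  have hSSW : S * (S * W) = 1 := by
    rw [← mul_assoc, hSS, hWdef, mpow_eq hMh]
    have e : hMh.cfc id * hMh.cfc (fun x => x ^ (-1 : ℝ)) = 1 := by
      rw [hcfc_mul, hcfc_congr hMh (g := fun _ => 1) (fun i => by
        rw [Real.rpow_neg_one]
        exact mul_inv_cancel₀ (mepos i).ne'), hcfc_one]
    rwa [hcfc_id] at e
  have hB' : Q * (S * S) * Q = B := by
    rw [hSS, show Q * (P * B * P) * Q = Q * (P * (B * (P * Q))) from by
      simp only [mul_assoc], hPQ, mul_one, h1]
  have hAinv : A⁻¹ = P * P := Matrix.inv_eq_right_inv (by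
    rw [← hQQ, mul_assoc, h1, hQP])
  have hBinv : B⁻¹ = P * W * P := Matrix.inv_eq_right_inv (by
    rw [← hB']
    have e4 : ∀ X, S * (S * (W * X)) = X := fun X => by
      rw [← mul_assoc, ← mul_assoc, mul_assoc S S W, hSSW, one_mul]
    simp only [mul_assoc, h1, h2, e4, hQP])
  have hPP : (P * P).PosDef := by
    rw [hPdef, mpow_eq hAh, hcfc_mul]
    exact hcfc_posdef hAh fun i =>
      mul_pos (Real.rpow_pos_of_pos (epos i) _) (Real.rpow_pos_of_pos (epos i) _)
  exact ⟨hQP, hPQ, hQQ, hQh, hPh, hSh, hSpos, hSS, hB', hAinv, hBinv, hWSS, hSSW, hPP⟩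

lemma conj_self {P Q C : Matrix (Fin n) (Fin n) ℂ}
    (hQP : Q * P = 1) (hPQ : P * Q = 1) (hC : Q * Q = C) : P * C * P = 1 := by
  rw [← hC, ← mul_assoc P Q Q, hPQ, one_mul, hQP]

lemma gmean_self (hB : B.PosDef) : gmean B B (1/2) = B := by
  obtain ⟨hQP, hPQ, hQQ, -, -, -, -, -, -, -, -, -, -, -⟩ := pack hB hB
  have hPBP : mpow B (-(1/2)) * B * mpow B (-(1/2)) = 1 := conj_self hQP hPQ hQQ
  unfold gmean
  rw [hPBP, mpow_one_mat, mul_one, hQQ]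

section iden
variable (Q P S W A' : Matrix (Fin n) (Fin n) ℂ) (c d : ℂ)
variable (hQP : Q * P = 1) (hPQ : P * Q = 1)

include hQP hPQ in
lemma iden1 (hQQ : Q * Q = A') :
    P * ((d • 1 + c • (Q * S * Q)) * (P * P) * (d • 1 + c • (Q * S * Q))
        - (d • 1 + c • A') * (P * P) * (d • 1 + c • A')) * P
      = (d * c) • (S * (P * P)) + (d * c) • ((P * P) * S) - (d * c * 2) • (P * P)
        + (c * c) • (S * S) - (c * c) • 1 := by
  subst hQQ
  have h1 : ∀ X, Q * (P * X) = X := fun X => by rw [← mul_assoc, hQP, one_mul]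
  have h2 : ∀ X, P * (Q * X) = X := fun X => by rw [← mul_assoc, hPQ, one_mul]
  simp only [mul_add, add_mul, mul_sub, sub_mul, smul_mul_assoc, mul_smul_comm, smul_smul,
    mul_one, one_mul, mul_assoc, h1, h2, hQP, hPQ]
  match_scalars <;> ring

include hQP hPQ in
lemma iden1' (hQQ : Q * Q = A') :
    P * ((d • 1 + c • A') * (P * P) * (d • 1 + c • A')
        - (d • 1 + c • (Q * S * Q)) * (P * P) * (d • 1 + c • (Q * S * Q))) * P
      = (d * c * 2) • (P * P) + (c * c) • 1
        - (d * c) • (S * (P * P)) - (d * c) • ((P * P) * S) - (c * c) • (S * S) := by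
  subst hQQ
  have h1 : ∀ X, Q * (P * X) = X := fun X => by rw [← mul_assoc, hQP, one_mul]
  have h2 : ∀ X, P * (Q * X) = X := fun X => by rw [← mul_assoc, hPQ, one_mul]
  simp only [mul_add, add_mul, mul_sub, sub_mul, smul_mul_assoc, mul_smul_comm, smul_smul,
    mul_one, one_mul, mul_assoc, h1, h2, hQP, hPQ]
  match_scalars <;> ring

variable (hWS : W * (S * S) = 1) (hSW : S * (S * W) = 1)

include hQP hPQ hWS hSW in
lemma iden2 (hBm : Q * (S * S) * Q = A') :
    Q * ((d • 1 + c • (Q * S * Q)) * (P * P) * (d • 1 + c • (Q * S * Q))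
        - (d • 1 + c • A') * (P * W * P) * (d • 1 + c • A')) * Q
      = (d * c) • (S * (Q * Q)) + (d * c) • ((Q * Q) * S) - (d * c * 2) • (Q * Q)
        + (d * d) • 1 - (d * d) • W := by
  subst hBm
  have h1 : ∀ X, Q * (P * X) = X := fun X => by rw [← mul_assoc, hQP, one_mul]
  have h2 : ∀ X, P * (Q * X) = X := fun X => by rw [← mul_assoc, hPQ, one_mul]
  have h3 : ∀ X, W * (S * (S * X)) = X := fun X => by
    rw [← mul_assoc, ← mul_assoc, mul_assoc W S S, hWS, one_mul]
  have h4 : ∀ X, S * (S * (W * X)) = X := fun X => by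
    rw [← mul_assoc, ← mul_assoc, mul_assoc S S W, hSW, one_mul]
  simp only [mul_add, add_mul, mul_sub, sub_mul, smul_mul_assoc, mul_smul_comm, smul_smul,
    mul_one, one_mul, mul_assoc, h1, h2, h3, h4, hQP, hPQ, hWS, hSW]
  match_scalars <;> ring

include hQP hPQ hWS hSW in
lemma iden2' (hBm : Q * (S * S) * Q = A') :
    Q * ((d • 1 + c • A') * (P * W * P) * (d • 1 + c • A')
        - (d • 1 + c • (Q * S * Q)) * (P * P) * (d • 1 + c • (Q * S * Q))) * Q
      = (d * c * 2) • (Q * Q) + (d * d) • W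
        - (d * c) • (S * (Q * Q)) - (d * c) • ((Q * Q) * S) - (d * d) • 1 := by
  subst hBm
  have h1 : ∀ X, Q * (P * X) = X := fun X => by rw [← mul_assoc, hQP, one_mul]
  have h2 : ∀ X, P * (Q * X) = X := fun X => by rw [← mul_assoc, hPQ, one_mul]
  have h3 : ∀ X, W * (S * (S * X)) = X := fun X => by
    rw [← mul_assoc, ← mul_assoc, mul_assoc W S S, hWS, one_mul]
  have h4 : ∀ X, S * (S * (W * X)) = X := fun X => by
    rw [← mul_assoc, ← mul_assoc, mul_assoc S S W, hSW, one_mul]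
  simp only [mul_add, add_mul, mul_sub, sub_mul, smul_mul_assoc, mul_smul_comm, smul_smul,
    mul_one, one_mul, mul_assoc, h1, h2, h3, h4, hQP, hPQ, hWS, hSW]
  match_scalars <;> ring
end iden

lemma eigvec_ne_zero {S : Matrix (Fin n) (Fin n) ℂ} (hS : S.IsHermitian) (i : Fin n) :
    (⇑(hS.eigenvectorBasis i) : Fin n → ℂ) ≠ 0 := by
  intro h
  exact hS.eigenvectorBasis.orthonormal.ne_zero i (by ext j; exact congrFun h j)

lemma eigvec_mulVec {S : Matrix (Fin n) (Fin n) ℂ} (hS : S.IsHermitian) (i : Fin n) :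
    S *ᵥ ⇑(hS.eigenvectorBasis i)
      = ((hS.eigenvalues i : ℝ) : ℂ) • ⇑(hS.eigenvectorBasis i) := by
  rw [hS.mulVec_eigenvectorBasis i, RCLike.real_smul_eq_coe_smul (K := ℂ)]
  rfl

lemma dot_S {S : Matrix (Fin n) (Fin n) ℂ} (hS : S.IsHermitian) (i : Fin n) (w : Fin n → ℂ) :
    star ⇑(hS.eigenvectorBasis i) ⬝ᵥ (S *ᵥ w)
      = ((hS.eigenvalues i : ℝ) : ℂ) * (star ⇑(hS.eigenvectorBasis i) ⬝ᵥ w) := by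
  rw [Matrix.dotProduct_mulVec]
  have e : star ⇑(hS.eigenvectorBasis i) ᵥ* S
      = ((hS.eigenvalues i : ℝ) : ℂ) • star ⇑(hS.eigenvectorBasis i) := by
    have := congrArg star (eigvec_mulVec hS i)
    rw [Matrix.star_mulVec, hS.eq, star_smul] at this
    simpa using this
  rw [e, smul_dotProduct, smul_eq_mul]

section eigentests
variable {S X W : Matrix (Fin n) (Fin n) ℂ}

lemma eigentest_ge1 (hS : S.IsHermitian) (hSpos : S.PosDef) (hX : X.PosDef)
    {a b : ℝ} (ha : 0 < a) (hb : 0 < b)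
    (hE : (((a : ℝ) : ℂ) • (S * X) + ((a : ℝ) : ℂ) • (X * S) - ((a * 2 : ℝ) : ℂ) • X
      + ((b : ℝ) : ℂ) • (S * S) - ((b : ℝ) : ℂ) • 1).PosSemidef) (i : Fin n) :
    1 ≤ hS.eigenvalues i := by
  by_contra hlt
  push_neg at hlt
  set v : Fin n → ℂ := ⇑(hS.eigenvectorBasis i) with hv
  set r : ℝ := hS.eigenvalues i with hrdef
  have hr0 : 0 < r := hSpos.eigenvalues_pos i
  have hq : 0 < (star v ⬝ᵥ (X *ᵥ v)).re := hX.re_dotProduct_pos (eigvec_ne_zero hS i)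
  have hN : 0 < (star v ⬝ᵥ v).re := by
    have := (Matrix.PosDef.one (n := Fin n) (R := ℂ)).re_dotProduct_pos (eigvec_ne_zero hS i)
    simpa [Matrix.one_mulVec] using this
  have hXS : star v ⬝ᵥ ((X * S) *ᵥ v) = ((r : ℝ) : ℂ) * (star v ⬝ᵥ (X *ᵥ v)) := by
    rw [← Matrix.mulVec_mulVec, eigvec_mulVec hS i, Matrix.mulVec_smul,
      dotProduct_smul, smul_eq_mul]
  have hSX : star v ⬝ᵥ ((S * X) *ᵥ v) = ((r : ℝ) : ℂ) * (star v ⬝ᵥ (X *ᵥ v)) := by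
    rw [← Matrix.mulVec_mulVec, dot_S hS i]
  have hSS : star v ⬝ᵥ ((S * S) *ᵥ v) = ((r : ℝ) : ℂ) * (((r : ℝ) : ℂ) * (star v ⬝ᵥ v)) := by
    rw [← Matrix.mulVec_mulVec, dot_S hS i, eigvec_mulVec hS i, dotProduct_smul, smul_eq_mul]
  have h0 := hE.re_dotProduct_nonneg v
  rw [Matrix.sub_mulVec, Matrix.add_mulVec, Matrix.sub_mulVec, Matrix.add_mulVec] at h0
  simp only [Matrix.smul_mulVec, dotProduct_add, dotProduct_sub,
    dotProduct_smul, smul_eq_mul, hXS, hSX, hSS, Matrix.one_mulVec,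
    RCLike.re_to_complex, Complex.add_re, Complex.sub_re, Complex.re_ofReal_mul] at h0
  nlinarith [mul_pos (mul_pos ha hq) (sub_pos.mpr hlt),
    mul_pos (mul_pos hb hN) (mul_pos (sub_pos.mpr hlt) (by linarith : (0:ℝ) < 1 + r))]

lemma eigentest_le1 (hS : S.IsHermitian) (hSpos : S.PosDef) (hX : X.PosDef)
    {a b : ℝ} (ha : 0 < a) (hb : 0 < b)
    (hE : (((a * 2 : ℝ) : ℂ) • X + ((b : ℝ) : ℂ) • 1 - ((a : ℝ) : ℂ) • (S * X)
      - ((a : ℝ) : ℂ) • (X * S) - ((b : ℝ) : ℂ) • (S * S)).PosSemidef) (i : Fin n) :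
    hS.eigenvalues i ≤ 1 := by
  by_contra hlt
  push_neg at hlt
  set v : Fin n → ℂ := ⇑(hS.eigenvectorBasis i) with hv
  set r : ℝ := hS.eigenvalues i with hrdef
  have hr0 : 0 < r := hSpos.eigenvalues_pos i
  have hq : 0 < (star v ⬝ᵥ (X *ᵥ v)).re := hX.re_dotProduct_pos (eigvec_ne_zero hS i)
  have hN : 0 < (star v ⬝ᵥ v).re := by
    have := (Matrix.PosDef.one (n := Fin n) (R := ℂ)).re_dotProduct_pos (eigvec_ne_zero hS i)
    simpa [Matrix.one_mulVec] using this
  have hXS : star v ⬝ᵥ ((X * S) *ᵥ v) = ((r : ℝ) : ℂ) * (star v ⬝ᵥ (X *ᵥ v)) := by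
    rw [← Matrix.mulVec_mulVec, eigvec_mulVec hS i, Matrix.mulVec_smul,
      dotProduct_smul, smul_eq_mul]
  have hSX : star v ⬝ᵥ ((S * X) *ᵥ v) = ((r : ℝ) : ℂ) * (star v ⬝ᵥ (X *ᵥ v)) := by
    rw [← Matrix.mulVec_mulVec, dot_S hS i]
  have hSS : star v ⬝ᵥ ((S * S) *ᵥ v) = ((r : ℝ) : ℂ) * (((r : ℝ) : ℂ) * (star v ⬝ᵥ v)) := by
    rw [← Matrix.mulVec_mulVec, dot_S hS i, eigvec_mulVec hS i, dotProduct_smul, smul_eq_mul]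
  have h0 := hE.re_dotProduct_nonneg v
  rw [Matrix.sub_mulVec, Matrix.sub_mulVec, Matrix.sub_mulVec, Matrix.add_mulVec] at h0
  simp only [Matrix.smul_mulVec, dotProduct_add, dotProduct_sub,
    dotProduct_smul, smul_eq_mul, hXS, hSX, hSS, Matrix.one_mulVec,
    RCLike.re_to_complex, Complex.add_re, Complex.sub_re, Complex.re_ofReal_mul] at h0
  nlinarith [mul_pos (mul_pos ha hq) (sub_pos.mpr hlt),
    mul_pos (mul_pos hb hN) (mul_pos (sub_pos.mpr hlt) (by linarith : (0:ℝ) < 1 + r))]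

lemma eigentest_ge2 (hS : S.IsHermitian) (hSpos : S.PosDef) (hX : X.PosDef)
    {a b : ℝ} (ha : 0 < a) (hb : 0 < b) (hW : W * (S * S) = 1)
    (hE : (((a : ℝ) : ℂ) • (S * X) + ((a : ℝ) : ℂ) • (X * S) - ((a * 2 : ℝ) : ℂ) • X
      + ((b : ℝ) : ℂ) • 1 - ((b : ℝ) : ℂ) • W).PosSemidef) (i : Fin n) :
    1 ≤ hS.eigenvalues i := by
  by_contra hlt
  push_neg at hlt
  set v : Fin n → ℂ := ⇑(hS.eigenvectorBasis i) with hv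
  set r : ℝ := hS.eigenvalues i with hrdef
  have hr0 : 0 < r := hSpos.eigenvalues_pos i
  have hq : 0 < (star v ⬝ᵥ (X *ᵥ v)).re := hX.re_dotProduct_pos (eigvec_ne_zero hS i)
  have hN : 0 < (star v ⬝ᵥ v).re := by
    have := (Matrix.PosDef.one (n := Fin n) (R := ℂ)).re_dotProduct_pos (eigvec_ne_zero hS i)
    simpa [Matrix.one_mulVec] using this
  have hXS : star v ⬝ᵥ ((X * S) *ᵥ v) = ((r : ℝ) : ℂ) * (star v ⬝ᵥ (X *ᵥ v)) := by
    rw [← Matrix.mulVec_mulVec, eigvec_mulVec hS i, Matrix.mulVec_smul,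
      dotProduct_smul, smul_eq_mul]
  have hSX : star v ⬝ᵥ ((S * X) *ᵥ v) = ((r : ℝ) : ℂ) * (star v ⬝ᵥ (X *ᵥ v)) := by
    rw [← Matrix.mulVec_mulVec, dot_S hS i]
  have hWv : (W * (S * S)) *ᵥ v = ((r : ℝ) : ℂ) • (((r : ℝ) : ℂ) • (W *ᵥ v)) := by
    rw [← Matrix.mulVec_mulVec, ← Matrix.mulVec_mulVec, eigvec_mulVec hS i,
      Matrix.mulVec_smul, eigvec_mulVec hS i, Matrix.mulVec_smul, Matrix.mulVec_smul]
  have hu : r * (r * (star v ⬝ᵥ (W *ᵥ v)).re) = (star v ⬝ᵥ v).re := by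
    have : star v ⬝ᵥ (((r : ℝ) : ℂ) • (((r : ℝ) : ℂ) • (W *ᵥ v))) = star v ⬝ᵥ v := by
      rw [← hWv, hW, Matrix.one_mulVec]
    rw [dotProduct_smul, dotProduct_smul, smul_eq_mul, smul_eq_mul] at this
    have := congrArg Complex.re this
    simpa [Complex.re_ofReal_mul] using this
  have hupos : 0 < (star v ⬝ᵥ (W *ᵥ v)).re := by nlinarith [mul_pos hr0 hr0]
  have h0 := hE.re_dotProduct_nonneg v
  rw [Matrix.sub_mulVec, Matrix.add_mulVec, Matrix.sub_mulVec, Matrix.add_mulVec] at h0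
  simp only [Matrix.smul_mulVec, dotProduct_add, dotProduct_sub,
    dotProduct_smul, smul_eq_mul, hXS, hSX, Matrix.one_mulVec,
    RCLike.re_to_complex, Complex.add_re, Complex.sub_re, Complex.re_ofReal_mul] at h0
  rw [← hu] at h0
  nlinarith [mul_pos (mul_pos ha hq) (sub_pos.mpr hlt),
    mul_pos (mul_pos hb hupos) (mul_pos (sub_pos.mpr hlt) (by linarith : (0:ℝ) < 1 + r))]

lemma eigentest_le2 (hS : S.IsHermitian) (hSpos : S.PosDef) (hX : X.PosDef)
    {a b : ℝ} (ha : 0 < a) (hb : 0 < b) (hW : W * (S * S) = 1)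
    (hE : (((a * 2 : ℝ) : ℂ) • X + ((b : ℝ) : ℂ) • W - ((a : ℝ) : ℂ) • (S * X)
      - ((a : ℝ) : ℂ) • (X * S) - ((b : ℝ) : ℂ) • 1).PosSemidef) (i : Fin n) :
    hS.eigenvalues i ≤ 1 := by
  by_contra hlt
  push_neg at hlt
  set v : Fin n → ℂ := ⇑(hS.eigenvectorBasis i) with hv
  set r : ℝ := hS.eigenvalues i with hrdef
  have hr0 : 0 < r := hSpos.eigenvalues_pos i
  have hq : 0 < (star v ⬝ᵥ (X *ᵥ v)).re := hX.re_dotProduct_pos (eigvec_ne_zero hS i)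
  have hN : 0 < (star v ⬝ᵥ v).re := by
    have := (Matrix.PosDef.one (n := Fin n) (R := ℂ)).re_dotProduct_pos (eigvec_ne_zero hS i)
    simpa [Matrix.one_mulVec] using this
  have hXS : star v ⬝ᵥ ((X * S) *ᵥ v) = ((r : ℝ) : ℂ) * (star v ⬝ᵥ (X *ᵥ v)) := by
    rw [← Matrix.mulVec_mulVec, eigvec_mulVec hS i, Matrix.mulVec_smul,
      dotProduct_smul, smul_eq_mul]
  have hSX : star v ⬝ᵥ ((S * X) *ᵥ v) = ((r : ℝ) : ℂ) * (star v ⬝ᵥ (X *ᵥ v)) := by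
    rw [← Matrix.mulVec_mulVec, dot_S hS i]
  have hWv : (W * (S * S)) *ᵥ v = ((r : ℝ) : ℂ) • (((r : ℝ) : ℂ) • (W *ᵥ v)) := by
    rw [← Matrix.mulVec_mulVec, ← Matrix.mulVec_mulVec, eigvec_mulVec hS i,
      Matrix.mulVec_smul, eigvec_mulVec hS i, Matrix.mulVec_smul, Matrix.mulVec_smul]
  have hu : r * (r * (star v ⬝ᵥ (W *ᵥ v)).re) = (star v ⬝ᵥ v).re := by
    have : star v ⬝ᵥ (((r : ℝ) : ℂ) • (((r : ℝ) : ℂ) • (W *ᵥ v))) = star v ⬝ᵥ v := by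
      rw [← hWv, hW, Matrix.one_mulVec]
    rw [dotProduct_smul, dotProduct_smul, smul_eq_mul, smul_eq_mul] at this
    have := congrArg Complex.re this
    simpa [Complex.re_ofReal_mul] using this
  have hupos : 0 < (star v ⬝ᵥ (W *ᵥ v)).re := by nlinarith [mul_pos hr0 hr0]
  have h0 := hE.re_dotProduct_nonneg v
  rw [Matrix.sub_mulVec, Matrix.sub_mulVec, Matrix.sub_mulVec, Matrix.add_mulVec] at h0
  simp only [Matrix.smul_mulVec, dotProduct_add, dotProduct_sub,
    dotProduct_smul, smul_eq_mul, hXS, hSX, Matrix.one_mulVec,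
    RCLike.re_to_complex, Complex.add_re, Complex.sub_re, Complex.re_ofReal_mul] at h0
  rw [← hu] at h0
  nlinarith [mul_pos (mul_pos ha hq) (sub_pos.mpr hlt),
    mul_pos (mul_pos hb hupos) (mul_pos (sub_pos.mpr hlt) (by linarith : (0:ℝ) < 1 + r))]
end eigentests

lemma conclude_ge {Q S A B : Matrix (Fin n) (Fin n) ℂ}
    (hSh : S.IsHermitian) (hQh : Q.IsHermitian) (hQQ : Q * Q = A)
    (hB' : Q * (S * S) * Q = B) (heig : ∀ i, 1 ≤ hSh.eigenvalues i) : LoewnerLE A B := by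
  have hpsd : (S * S - 1).PosSemidef := by
    have e : S * S - (1 : Matrix (Fin n) (Fin n) ℂ) = hSh.cfc (fun x => id x * id x - 1) := by
      conv_lhs => rw [← hcfc_id hSh, ← hcfc_one hSh]
      rw [hcfc_mul, hcfc_sub]
    rw [e]
    exact hcfc_psd hSh fun i => by have := heig i; simp only [id]; nlinarith
  have e2 : B - A = Q * (S * S - 1) * Q := by
    rw [← hQQ, ← hB', Matrix.mul_sub, Matrix.sub_mul, mul_one]
  unfold LoewnerLE
  rw [e2]
  have h := hpsd.mul_mul_conjTranspose_same Q
  rwa [hQh.eq] at h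

lemma conclude_le {Q S A B : Matrix (Fin n) (Fin n) ℂ}
    (hSh : S.IsHermitian) (hSpos : S.PosDef) (hQh : Q.IsHermitian) (hQQ : Q * Q = B)
    (hA' : Q * (S * S) * Q = A) (heig : ∀ i, hSh.eigenvalues i ≤ 1) : LoewnerLE A B := by
  have hpsd : ((1 : Matrix (Fin n) (Fin n) ℂ) - S * S).PosSemidef := by
    have e : (1 : Matrix (Fin n) (Fin n) ℂ) - S * S = hSh.cfc (fun x => 1 - id x * id x) := by
      conv_lhs => rw [← hcfc_id hSh, ← hcfc_one hSh]
      rw [hcfc_mul, hcfc_sub]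
    rw [e]
    refine hcfc_psd hSh fun i => ?_
    have h1 := heig i
    have h2 : 0 < hSh.eigenvalues i := hSpos.eigenvalues_pos i
    simp only [id]
    nlinarith
  have e2 : B - A = Q * (1 - S * S) * Q := by
    rw [← hQQ, ← hA', Matrix.mul_sub, Matrix.sub_mul, mul_one]
  unfold LoewnerLE
  rw [e2]
  have h := hpsd.mul_mul_conjTranspose_same Q
  rwa [hQh.eq] at h

variable {t : ℝ}

lemma case1 (hA : A.PosDef) (hB : B.PosDef) (ht0 : 0 < t) (ht1 : t < 1)
    (h : LoewnerLE (wmean A⁻¹ A t) (wmean A⁻¹ B t)) : LoewnerLE A B := by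
  obtain ⟨hQP, hPQ, hQQ, hQh, hPh, hSh, hSpos, hSS, hB', hAinv, hBinv, hWSS, hSSW, hPP⟩ :=
    pack hA hB
  have hdetA : IsUnit A.det := (Matrix.isUnit_iff_isUnit_det A).mp hA.isUnit
  unfold LoewnerLE wmean at h
  rw [Matrix.nonsing_inv_nonsing_inv A hdetA, gmean_self hA] at h
  unfold gmean at h
  rw [hAinv] at h
  have hE := h.mul_mul_conjTranspose_same (mpow A (-(1/2)))
  rw [hPh.eq, iden1 _ _ _ _ _ _ hQP hPQ hQQ] at hE
  rw [show ((1 - t : ℝ) : ℂ) * ((t : ℝ) : ℂ) = (((1 - t) * t : ℝ) : ℂ) from by push_cast; ring,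
    show ((((1 - t) * t : ℝ)) : ℂ) * 2 = (((1 - t) * t * 2 : ℝ) : ℂ) from by push_cast; ring,
    show ((t : ℝ) : ℂ) * ((t : ℝ) : ℂ) = ((t * t : ℝ) : ℂ) from by push_cast; ring] at hE
  exact conclude_ge hSh hQh hQQ hB'
    (eigentest_ge1 hSh hSpos hPP (mul_pos (by linarith) ht0) (mul_pos ht0 ht0) hE)

lemma case2 (hA : A.PosDef) (hB : B.PosDef) (ht0 : 0 < t) (ht1 : t < 1)
    (h : LoewnerLE (wmean B⁻¹ B t) (wmean A⁻¹ B t)) : LoewnerLE A B := by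
  obtain ⟨hQP, hPQ, hQQ, hQh, hPh, hSh, hSpos, hSS, hB', hAinv, hBinv, hWSS, hSSW, hPP⟩ :=
    pack hA hB
  have hdetA : IsUnit A.det := (Matrix.isUnit_iff_isUnit_det A).mp hA.isUnit
  have hdetB : IsUnit B.det := (Matrix.isUnit_iff_isUnit_det B).mp hB.isUnit
  unfold LoewnerLE wmean at h
  rw [Matrix.nonsing_inv_nonsing_inv A hdetA, Matrix.nonsing_inv_nonsing_inv B hdetB,
    gmean_self hB] at h
  unfold gmean at h
  rw [hAinv, hBinv] at h
  have hE := h.mul_mul_conjTranspose_same (mpow A (1/2))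
  rw [hQh.eq, iden2 _ _ _ _ _ _ _ hQP hPQ hWSS hSSW hB'] at hE
  rw [show ((1 - t : ℝ) : ℂ) * ((t : ℝ) : ℂ) = (((1 - t) * t : ℝ) : ℂ) from by push_cast; ring,
    show ((((1 - t) * t : ℝ)) : ℂ) * 2 = (((1 - t) * t * 2 : ℝ) : ℂ) from by push_cast; ring,
    show ((1 - t : ℝ) : ℂ) * ((1 - t : ℝ) : ℂ) = (((1 - t) * (1 - t) : ℝ) : ℂ) from by
      push_cast; ring] at hE
  have hQQpos : (mpow A (1/2) * mpow A (1/2)).PosDef := by rw [hQQ]; exact hA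
  exact conclude_ge hSh hQh hQQ hB'
    (eigentest_ge2 hSh hSpos hQQpos (mul_pos (by linarith) ht0)
      (mul_pos (by linarith) (by linarith)) hWSS hE)

lemma case3 (hA : A.PosDef) (hB : B.PosDef) (ht0 : 0 < t) (ht1 : t < 1)
    (h : LoewnerLE (wmean B⁻¹ A t) (wmean A⁻¹ A t)) : LoewnerLE A B := by
  obtain ⟨hQP, hPQ, hQQ, hQh, hPh, hSh, hSpos, hSS, hA', hBinv, hAinv, hWSS, hSSW, hPP⟩ :=
    pack hB hA
  have hdetA : IsUnit A.det := (Matrix.isUnit_iff_isUnit_det A).mp hA.isUnit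
  have hdetB : IsUnit B.det := (Matrix.isUnit_iff_isUnit_det B).mp hB.isUnit
  unfold LoewnerLE wmean at h
  rw [Matrix.nonsing_inv_nonsing_inv A hdetA, Matrix.nonsing_inv_nonsing_inv B hdetB,
    gmean_self hA] at h
  unfold gmean at h
  rw [hAinv, hBinv] at h
  have hE := h.mul_mul_conjTranspose_same (mpow B (1/2))
  rw [hQh.eq, iden2' _ _ _ _ _ _ _ hQP hPQ hWSS hSSW hA'] at hE
  rw [show ((1 - t : ℝ) : ℂ) * ((t : ℝ) : ℂ) = (((1 - t) * t : ℝ) : ℂ) from by push_cast; ring,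
    show ((((1 - t) * t : ℝ)) : ℂ) * 2 = (((1 - t) * t * 2 : ℝ) : ℂ) from by push_cast; ring,
    show ((1 - t : ℝ) : ℂ) * ((1 - t : ℝ) : ℂ) = (((1 - t) * (1 - t) : ℝ) : ℂ) from by
      push_cast; ring] at hE
  have hQQpos : (mpow B (1/2) * mpow B (1/2)).PosDef := by rw [hQQ]; exact hB
  exact conclude_le hSh hSpos hQh hQQ hA'
    (eigentest_le2 hSh hSpos hQQpos (mul_pos (by linarith) ht0)
      (mul_pos (by linarith) (by linarith)) hWSS hE)

lemma case4 (hA : A.PosDef) (hB : B.PosDef) (ht0 : 0 < t) (ht1 : t < 1)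
    (h : LoewnerLE (wmean B⁻¹ A t) (wmean B⁻¹ B t)) : LoewnerLE A B := by
  obtain ⟨hQP, hPQ, hQQ, hQh, hPh, hSh, hSpos, hSS, hA', hBinv, hAinv, hWSS, hSSW, hPP⟩ :=
    pack hB hA
  have hdetB : IsUnit B.det := (Matrix.isUnit_iff_isUnit_det B).mp hB.isUnit
  unfold LoewnerLE wmean at h
  rw [Matrix.nonsing_inv_nonsing_inv B hdetB, gmean_self hB] at h
  unfold gmean at h
  rw [hBinv] at h
  have hE := h.mul_mul_conjTranspose_same (mpow B (-(1/2)))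
  rw [hPh.eq, iden1' _ _ _ _ _ _ hQP hPQ hQQ] at hE
  rw [show ((1 - t : ℝ) : ℂ) * ((t : ℝ) : ℂ) = (((1 - t) * t : ℝ) : ℂ) from by push_cast; ring,
    show ((((1 - t) * t : ℝ)) : ℂ) * 2 = (((1 - t) * t * 2 : ℝ) : ℂ) from by push_cast; ring,
    show ((t : ℝ) : ℂ) * ((t : ℝ) : ℂ) = ((t * t : ℝ) : ℂ) from by push_cast; ring] at hE
  exact conclude_le hSh hSpos hQh hQQ hA'
    (eigentest_le1 hSh hSpos hPP (mul_pos (by linarith) ht0) (mul_pos ht0 ht0) hE)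

end WassersteinProof

/-- for `t ∈ (0,1)`, each of the four Loewner inequalities between
Wasserstein means implies `A ≤ B`. -/
theorem wmean_loewner_implies_loewner {n : ℕ} (A B : Matrix (Fin n) (Fin n) ℂ)
    (hA : A.PosDef) (hB : B.PosDef) (t : ℝ) (ht0 : 0 < t) (ht1 : t < 1)
    (hyp : LoewnerLE (wmean A⁻¹ A t) (wmean A⁻¹ B t) ∨
      LoewnerLE (wmean B⁻¹ B t) (wmean A⁻¹ B t) ∨
      LoewnerLE (wmean B⁻¹ A t) (wmean A⁻¹ A t) ∨
      LoewnerLE (wmean B⁻¹ A t) (wmean B⁻¹ B t)) :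
    LoewnerLE A B := by
  rcases hyp with h | h | h | h
  · exact WassersteinProof.case1 hA hB ht0 ht1 h
  · exact WassersteinProof.case2 hA hB ht0 ht1 h
  · exact WassersteinProof.case3 hA hB ht0 ht1 h
  · exact WassersteinProof.case4 hA hB ht0 ht1 h
end
end

section
/- Let A, B be n×n complex positive definite matrices. For every t ∈ (0, 1): |(A ◇_t B)^{1/2} A^{1/2}| ≥ A ◇_t |B^{1/2} A^{1/2}| in the Loewner order, where |X| = (X*X)^{1/2}. -/
open scoped ComplexOrder Matrix

noncomputable section

namespace Hlp

variable {n : ℕ}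

lemma contOn (f : ℝ → ℝ) (A : Matrix (Fin n) (Fin n) ℂ) : ContinuousOn f (spectrum ℝ A) :=
  (Matrix.finite_real_spectrum (A := A)).continuousOn f

lemma contOn' (f : ℝ → ℝ) {A : Matrix (Fin n) (Fin n) ℂ} (g : ℝ → ℝ) :
    ContinuousOn f (g '' (spectrum ℝ A)) :=
  ((Matrix.finite_real_spectrum (A := A)).image g).continuousOn f

lemma herm_cfc (f : ℝ → ℝ) (A : Matrix (Fin n) (Fin n) ℂ) : (cfc f A).IsHermitian :=
  (cfc_predicate f A : IsSelfAdjoint _)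

lemma herm_mpow (A : Matrix (Fin n) (Fin n) ℂ) (t : ℝ) : (mpow A t).IsHermitian :=
  herm_cfc _ A

lemma spec_pos {A : Matrix (Fin n) (Fin n) ℂ} (hA : A.PosDef) :
    ∀ x ∈ spectrum ℝ A, 0 < x := by
  rw [hA.isHermitian.spectrum_real_eq_range_eigenvalues]
  rintro x ⟨i, rfl⟩
  exact hA.eigenvalues_pos i

lemma posDef_conj {A : Matrix (Fin n) (Fin n) ℂ} (hA : A.PosDef)
    {U : Matrix (Fin n) (Fin n) ℂ} (hU : IsUnit U) : (U * A * Uᴴ).PosDef := by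
  refine Matrix.PosDef.of_dotProduct_mulVec_pos ?_ fun x hx => ?_
  · simp only [Matrix.IsHermitian, Matrix.conjTranspose_mul,
      Matrix.conjTranspose_conjTranspose, hA.1.eq, Matrix.mul_assoc]
  · have hUH : IsUnit Uᴴ := (Matrix.isUnit_conjTranspose U).mpr hU
    have hxne : Uᴴ *ᵥ x ≠ 0 := by
      intro h
      exact hx <| (Matrix.mulVec_injective_iff_isUnit.mpr hUH) (by simpa using h)
    have h2 := hA.dotProduct_mulVec_pos hxne
    have key : star x ⬝ᵥ (U * A * Uᴴ) *ᵥ x = star (Uᴴ *ᵥ x) ⬝ᵥ A *ᵥ (Uᴴ *ᵥ x) := by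
      simp only [Matrix.star_mulVec, Matrix.conjTranspose_conjTranspose,
        Matrix.dotProduct_mulVec, Matrix.vecMul_vecMul, Matrix.mul_assoc]
    rw [key]; exact h2

lemma cfc_posDef {A : Matrix (Fin n) (Fin n) ℂ} (hA : A.PosDef) (f : ℝ → ℝ)
    (hf : ∀ x ∈ spectrum ℝ A, 0 < f x) : (cfc f A).PosDef := by
  rw [hA.1.cfc_eq, Matrix.IsHermitian.cfc]
  have hU : IsUnit (hA.1.eigenvectorUnitary : Matrix (Fin n) (Fin n) ℂ) :=
    (Unitary.toUnits hA.1.eigenvectorUnitary).isUnit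
  have hD : (Matrix.diagonal ((RCLike.ofReal : ℝ → ℂ) ∘ f ∘ hA.1.eigenvalues)).PosDef := by
    refine Matrix.posDef_diagonal_iff.mpr fun i => ?_
    have : 0 < f (hA.1.eigenvalues i) :=
      hf _ (by rw [hA.isHermitian.spectrum_real_eq_range_eigenvalues]; exact ⟨i, rfl⟩)
    simpa only [Function.comp_apply] using RCLike.ofReal_pos.mpr this
  have := posDef_conj hD hU
  rwa [← Matrix.star_eq_conjTranspose] at this

lemma mpow_posDef {A : Matrix (Fin n) (Fin n) ℂ} (hA : A.PosDef) (t : ℝ) :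
    (mpow A t).PosDef :=
  cfc_posDef hA _ fun x hx => Real.rpow_pos_of_pos (spec_pos hA x hx) t

lemma mpow_one' {A : Matrix (Fin n) (Fin n) ℂ} (hA : A.PosDef) : mpow A 1 = A := by
  unfold mpow
  rw [cfc_congr (g := fun x : ℝ => x) fun x _ => Real.rpow_one x]
  exact cfc_id' ℝ A hA.1.isSelfAdjoint

lemma mpow_add {A : Matrix (Fin n) (Fin n) ℂ} (hA : A.PosDef) (s t : ℝ) :
    mpow A s * mpow A t = mpow A (s + t) := by
  unfold mpow
  rw [← cfc_mul _ _ A (contOn _ _) (contOn _ _)]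
  exact cfc_congr fun x hx => (Real.rpow_add (spec_pos hA x hx) s t).symm

lemma mpow_zero' {A : Matrix (Fin n) (Fin n) ℂ} (hA : A.PosDef) : mpow A 0 = 1 := by
  unfold mpow
  rw [cfc_congr (g := fun _ : ℝ => (1 : ℝ)) fun x _ => Real.rpow_zero x]
  exact cfc_one ℝ A hA.1.isSelfAdjoint

lemma mpow_half_sq {A : Matrix (Fin n) (Fin n) ℂ} (hA : A.PosDef) :
    mpow A (1/2) * mpow A (1/2) = A := by
  rw [mpow_add hA]; norm_num [mpow_one' hA]

lemma mpow_half_inv {A : Matrix (Fin n) (Fin n) ℂ} (hA : A.PosDef) :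
    mpow A (1/2) * mpow A (-(1/2)) = 1 := by
  rw [mpow_add hA]; norm_num [mpow_zero' hA]

lemma mpow_inv_half {A : Matrix (Fin n) (Fin n) ℂ} (hA : A.PosDef) :
    mpow A (-(1/2)) * mpow A (1/2) = 1 := by
  rw [mpow_add hA]; norm_num [mpow_zero' hA]

lemma inv_eq_mpow {A : Matrix (Fin n) (Fin n) ℂ} (hA : A.PosDef) : A⁻¹ = mpow A (-1) := by
  refine Matrix.inv_eq_left_inv ?_
  have h := mpow_add hA (-1) 1
  rw [mpow_one' hA] at h
  rw [h]
  norm_num [mpow_zero' hA]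

lemma mpow_mpow {A : Matrix (Fin n) (Fin n) ℂ} (hA : A.PosDef) (s t : ℝ) :
    mpow (mpow A s) t = mpow A (s * t) := by
  unfold mpow
  rw [← cfc_comp (fun x : ℝ => x ^ t) (fun x : ℝ => x ^ s) A hA.1.isSelfAdjoint
    (contOn' _ _) (contOn _ _)]
  exact cfc_congr fun x hx => by
    simp only [Function.comp_apply]
    rw [← Real.rpow_mul (spec_pos hA x hx).le]

lemma mpow_inv {A : Matrix (Fin n) (Fin n) ℂ} (hA : A.PosDef) (t : ℝ) :
    mpow A⁻¹ t = mpow A (-t) := by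
  rw [inv_eq_mpow hA, mpow_mpow hA]
  norm_num

lemma mpow_sq {A : Matrix (Fin n) (Fin n) ℂ} (hA : A.PosDef) :
    mpow (A * A) (1/2) = A := by
  have h2 : A * A = mpow A 2 := by
    have := mpow_add hA 1 1
    rw [mpow_one' hA] at this
    rw [this]; norm_num
  rw [h2, mpow_mpow hA]
  norm_num [mpow_one' hA]

lemma posSemidef_smul {A : Matrix (Fin n) (Fin n) ℂ} (hA : A.PosSemidef) {c : ℝ}
    (hc : 0 ≤ c) : ((c : ℂ) • A).PosSemidef := by
  refine Matrix.PosSemidef.of_dotProduct_mulVec_nonneg ?_ fun x => ?_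
  · simp [Matrix.IsHermitian, Matrix.conjTranspose_smul, hA.1.eq, Complex.conj_ofReal]
  · rw [Matrix.smul_mulVec, dotProduct_smul, smul_eq_mul]
    exact mul_nonneg (by exact_mod_cast hc) (hA.dotProduct_mulVec_nonneg x)

lemma posDef_smul {A : Matrix (Fin n) (Fin n) ℂ} (hA : A.PosDef) {c : ℝ}
    (hc : 0 < c) : ((c : ℂ) • A).PosDef := by
  refine Matrix.PosDef.of_dotProduct_mulVec_pos ?_ fun x hx => ?_
  · simp [Matrix.IsHermitian, Matrix.conjTranspose_smul, hA.1.eq, Complex.conj_ofReal]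
  · rw [Matrix.smul_mulVec, dotProduct_smul, smul_eq_mul]
    exact mul_pos (by exact_mod_cast hc) (hA.dotProduct_mulVec_pos hx)

end Hlp

/-- for `t ∈ (0,1)`,
`|(A ◇ₜ B)^{1/2} A^{1/2}| ≥ A ◇ₜ |B^{1/2} A^{1/2}|` in the Loewner order. -/
theorem abs_wmean_ge_wmean_abs {n : ℕ} (A B : Matrix (Fin n) (Fin n) ℂ)
    (hA : A.PosDef) (hB : B.PosDef) :
    ∀ t : ℝ, 0 < t → t < 1 →
      LoewnerLE (wmean A (matAbs (mpow B (1/2) * mpow A (1/2))) t)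
        (matAbs (mpow (wmean A B t) (1/2) * mpow A (1/2))) := by
  intro t ht0 ht1
  have hco : (0:ℝ) < 1 - t := by linarith
  set r := mpow A (1/2) with hr_def
  set ri := mpow A (-(1/2)) with hri_def
  have hr : r.PosDef := Hlp.mpow_posDef hA _
  have hri : ri.PosDef := Hlp.mpow_posDef hA _
  have hrh : rᴴ = r := (Hlp.herm_mpow A _).eq
  have hrih : riᴴ = ri := (Hlp.herm_mpow A _).eq
  have hrr : r * r = A := Hlp.mpow_half_sq hA
  have hrri : r * ri = 1 := Hlp.mpow_half_inv hA
  have hrir : ri * r = 1 := Hlp.mpow_inv_half hA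
  have e1 : ∀ X : Matrix (Fin n) (Fin n) ℂ, r * (ri * X) = X := fun X => by
    rw [← Matrix.mul_assoc, hrri, Matrix.one_mul]
  have e2 : ∀ X : Matrix (Fin n) (Fin n) ℂ, ri * (r * X) = X := fun X => by
    rw [← Matrix.mul_assoc, hrir, Matrix.one_mul]
  -- S := |B^{1/2} A^{1/2}|
  have hrBr : (r * B * r).PosDef := by
    have := Hlp.posDef_conj hB hr.isUnit
    rwa [hrh] at this
  set S := mpow (r * B * r) (1/2) with hS_def
  have hS : S.PosDef := Hlp.mpow_posDef hrBr _
  have hSh : Sᴴ = S := (Hlp.herm_mpow _ _).eq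
  have hmA : matAbs (mpow B (1/2) * r) = S := by
    unfold matAbs
    rw [hS_def]
    congr 1
    rw [Matrix.conjTranspose_mul, (Hlp.herm_mpow B _).eq, hrh]
    rw [Matrix.mul_assoc, ← Matrix.mul_assoc (mpow B (1/2)), Hlp.mpow_half_sq hB,
      ← Matrix.mul_assoc]
  -- geometric means with A⁻¹
  have hgm : ∀ C : Matrix (Fin n) (Fin n) ℂ,
      gmean A⁻¹ C (1/2) = ri * mpow (r * C * r) (1/2) * ri := by
    intro C
    unfold gmean
    rw [Hlp.mpow_inv hA (1/2), Hlp.mpow_inv hA (-(1/2)),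
      (show -(-(1/2:ℝ)) = (1/2:ℝ) by norm_num)]
  set c : ℂ := ((1 - t : ℝ) : ℂ) with hc_def
  set d : ℂ := ((t : ℝ) : ℂ) with hd_def
  have hcd : c = 1 - d := by rw [hc_def, hd_def]; push_cast; ring
  -- the RHS equals c • A + d • S
  have hGB' : (ri * S * ri).PosDef := by
    have := Hlp.posDef_conj hS hri.isUnit
    rwa [hrih] at this
  have hMh : (c • 1 + d • (ri * S * ri))ᴴ = c • 1 + d • (ri * S * ri) := by
    have h3 : (ri * S * ri)ᴴ = ri * S * ri := by
      simp [Matrix.conjTranspose_mul, hrih, hSh, Matrix.mul_assoc]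
    simp [Matrix.conjTranspose_smul, h3, hc_def, hd_def, Complex.conj_ofReal]
  have hM : (c • 1 + d • (ri * S * ri)).PosDef :=
    (Hlp.posDef_smul Matrix.PosDef.one hco).add (Hlp.posDef_smul hGB' ht0)
  have hwB : wmean A B t = (c • 1 + d • (ri * S * ri)) * A * (c • 1 + d • (ri * S * ri)) := by
    unfold wmean
    rw [hgm B, ← hS_def]
  have hW : (wmean A B t).PosDef := by
    rw [hwB]
    have := Hlp.posDef_conj hA hM.isUnit
    rwa [hMh] at this
  have hK : (c • A + d • S).PosDef :=
    (Hlp.posDef_smul hA hco).add (Hlp.posDef_smul hS ht0)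
  have hrWr : r * wmean A B t * r = (c • A + d • S) * (c • A + d • S) := by
    rw [hwB]
    have hMr : r * (c • 1 + d • (ri * S * ri)) * r = c • A + d • S := by
      simp only [Matrix.mul_add, Matrix.add_mul, mul_smul_comm, smul_mul_assoc,
        Matrix.mul_one, Matrix.mul_assoc, e1]
      rw [hrr, hrir, Matrix.mul_one]
    calc r * ((c • 1 + d • (ri * S * ri)) * A * (c • 1 + d • (ri * S * ri))) * r
        = (r * (c • 1 + d • (ri * S * ri)) * r) * (ri * A * ri) *
            (r * (c • 1 + d • (ri * S * ri)) * r) := by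
          simp only [Matrix.mul_assoc, e1, e2]
      _ = (c • A + d • S) * (c • A + d • S) := by
          rw [hMr]
          have : ri * A * ri = 1 := by
            rw [← hrr, ← Matrix.mul_assoc ri r r, hrir, Matrix.one_mul, hrri]
          rw [this, Matrix.mul_one]
  have hRHS : matAbs (mpow (wmean A B t) (1/2) * r) = c • A + d • S := by
    unfold matAbs
    rw [Matrix.conjTranspose_mul, hrh, (Hlp.herm_mpow _ _).eq,
      Matrix.mul_assoc r, ← Matrix.mul_assoc (mpow (wmean A B t) (1/2)),
      Hlp.mpow_half_sq hW, ← Matrix.mul_assoc, hrWr, Hlp.mpow_sq hK]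
  -- the LHS : wmean A S t
  have hrSr : (r * S * r).PosDef := by
    have := Hlp.posDef_conj hS hr.isUnit
    rwa [hrh] at this
  set gi := mpow (r * S * r) (1/2) with hgi_def
  have hgih : giᴴ = gi := (Hlp.herm_mpow _ _).eq
  set G := ri * gi * ri with hG_def
  have hGS : gmean A⁻¹ S (1/2) = G := by rw [hgm S, ← hgi_def]
  have hGh : Gᴴ = G := by
    simp [hG_def, Matrix.conjTranspose_mul, hrih, hgih, Matrix.mul_assoc]
  have e4 : ∀ X : Matrix (Fin n) (Fin n) ℂ, gi * (gi * X) = r * (S * (r * X)) := fun X => by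
    rw [← Matrix.mul_assoc, Hlp.mpow_half_sq hrSr, Matrix.mul_assoc, Matrix.mul_assoc]
  have hGAG : G * (A * G) = S := by
    rw [hG_def, ← hrr]
    simp only [Matrix.mul_assoc, e1, e2, e4]
    rw [hrri, Matrix.mul_one]
  -- final computation
  rw [hmA, hRHS]
  unfold LoewnerLE wmean
  rw [hGS]
  have key : c • A + d • S - (c • 1 + d • G) * A * (c • 1 + d • G)
      = (c * d) • ((1 - G) * A * (1 - G)) := by
    rw [hcd]
    simp only [Matrix.mul_add, Matrix.add_mul, Matrix.sub_mul, Matrix.mul_sub,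
      mul_smul_comm, smul_mul_assoc, Matrix.one_mul, Matrix.mul_one, smul_smul,
      Matrix.mul_assoc, hGAG]
    module
  rw [key]
  have hps : ((1 - G) * A * (1 - G)ᴴ).PosSemidef :=
    hA.posSemidef.mul_mul_conjTranspose_same (1 - G)
  rw [Matrix.conjTranspose_sub, Matrix.conjTranspose_one, hGh] at hps
  have hsc : c * d = (((1 - t) * t : ℝ) : ℂ) := by rw [hc_def, hd_def]; push_cast; ring
  rw [hsc]
  exact Hlp.posSemidef_smul hps (by nlinarith)
end
end
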